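/- arXiv:2504.19381 — 5 statements merged into one kernel-verified Lean document; each statement's English description precedes it below -/
import Mathlib

section
/- Let m ≥ 2 and let X₁, …, Xₘ be i.i.d. random variables with the exponential distribution of rate λ > 0 (density λ e^{−λx} on x ≥ 0). Then the m-th Gini index IG_m = E[max{X₁,…,Xₘ} − min{X₁,…,Xₘ}]/(m·E[X₁]) equals (1/m)·( Σ_{k=1}^{m} C(m,k) (−1)^{k+1}/k − 1/m ), where C(m,k) denotes the binomial coefficient. -/
open MeasureTheory ProbabilityTheory Set Real Filter Topology

lemma aux_int_exp (c t : ℝ) (hc : 0 < c) :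
    ∫ x in Ioi t, c * rexp (-(c * x)) = rexp (-(c * t)) := by
  have hInt : IntegrableOn (fun x => c * rexp (-(c * x))) (Ioi t) := by
    have := (exp_neg_integrableOn_Ioi t hc).const_mul c
    simp only [neg_mul] at this; exact this
  have hT : Tendsto (fun a : ℝ => -rexp (-(c * a))) atTop (𝓝 0) := by
    have h1 : Tendsto (fun a : ℝ => -(c * a)) atTop atBot := by
      apply tendsto_neg_atTop_atBot.comp
      exact Tendsto.const_mul_atTop hc tendsto_id
    have h2 : Tendsto (fun a : ℝ => rexp (-(c * a))) atTop (𝓝 0) :=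
      Real.tendsto_exp_atBot.comp h1
    simpa using h2.neg
  have := integral_Ioi_of_hasDerivAt_of_tendsto' (f := fun a => -rexp (-(c * a)))
    (f' := fun x => c * rexp (-(c * x))) (a := t)
    (fun x _ => hasDerivAt_neg_exp_mul_exp) hInt hT
  simpa using this

lemma aux_int_exp' (c t : ℝ) (hc : 0 < c) :
    ∫ x in Ioi t, rexp (-(c * x)) = rexp (-(c * t)) / c := by
  rw [eq_div_iff hc.ne', mul_comm, ← integral_const_mul, aux_int_exp c t hc]

lemma aux_binom (m : ℕ) (u : ℝ) :
    1 - (1 - u) ^ m = ∑ k ∈ Finset.Icc 1 m, (m.choose k : ℝ) * (-1) ^ (k + 1) * u ^ k := by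
  have h : (1 - u) ^ m = ∑ k ∈ Finset.range (m + 1), (-u) ^ k * (m.choose k : ℝ) := by
    have := add_pow (-u) 1 m
    simpa [sub_eq_neg_add] using this
  have hsplit : ∑ k ∈ Finset.range (m + 1), (-u) ^ k * (m.choose k : ℝ)
      = 1 + ∑ k ∈ Finset.Icc 1 m, (-u) ^ k * (m.choose k : ℝ) := by
    rw [Finset.range_eq_Ico, ← Finset.sum_Ico_consecutive _ (Nat.zero_le 1) (by omega)]
    rw [show Finset.Ico 1 (m + 1) = Finset.Icc 1 m from Finset.Ico_add_one_right_eq_Icc 1 m]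
    norm_num
  rw [h, hsplit]
  rw [show (1 : ℝ) - (1 + ∑ k ∈ Finset.Icc 1 m, (-u) ^ k * (m.choose k : ℝ))
      = ∑ k ∈ Finset.Icc 1 m, -((-u) ^ k * (m.choose k : ℝ)) by
    rw [Finset.sum_neg_distrib]; ring]
  apply Finset.sum_congr rfl
  intro k _
  rw [neg_pow, pow_succ]
  ring


lemma aux_exp_Iic {l : ℝ} (hl : 0 < l) {t : ℝ} (ht : 0 ≤ t) :
    expMeasure l (Iic t) = ENNReal.ofReal (1 - rexp (-(l * t))) := by
  rw [expMeasure, gammaMeasure, withDensity_apply _ measurableSet_Iic]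
  have h : ∀ x, gammaPDF 1 l x = exponentialPDF l x := fun x => rfl
  simp_rw [h]
  rw [lintegral_exponentialPDF_eq_antiDeriv hl t, if_pos ht]

lemma aux_exp_Iio0 (l : ℝ) : expMeasure l (Iio 0) = 0 := by
  rw [expMeasure, gammaMeasure, withDensity_apply _ measurableSet_Iio]
  have h : ∀ x, gammaPDF 1 l x = exponentialPDF l x := fun x => rfl
  simp_rw [h]
  exact lintegral_exponentialPDF_of_nonpos le_rfl

lemma aux_exp_Ioi {l : ℝ} (hl : 0 < l) {t : ℝ} (ht : 0 ≤ t) :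
    expMeasure l (Ioi t) = ENNReal.ofReal (rexp (-(l * t))) := by
  haveI : IsProbabilityMeasure (expMeasure l) := isProbabilityMeasure_expMeasure hl
  have hc : Ioi t = (Iic t)ᶜ := by ext x; simp
  have he1 : rexp (-(l * t)) ≤ 1 :=
    Real.exp_le_one_iff.mpr (neg_nonpos.mpr (mul_nonneg hl.le ht))
  rw [hc, prob_compl_eq_one_sub measurableSet_Iic, aux_exp_Iic hl ht,
    ← ENNReal.ofReal_one, ← ENNReal.ofReal_sub _ (by linarith)]
  norm_num

/-- For i.i.d. `X₁,…,Xₘ` (`m ≥ 2`) with the exponential distribution of rate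
`λ > 0`, the `m`-th Gini index `E[max − min]/(m E[X₁])` equals
`(1/m)(Σ_{k=1}^m C(m,k)(−1)^{k+1}/k − 1/m)`. -/
theorem mth_Gini_index_exponential
    {Ω : Type*} [MeasureSpace Ω] [IsProbabilityMeasure (ℙ : Measure Ω)]
    (m : ℕ) (hm : 2 ≤ m) (l : ℝ) (hl : 0 < l) (X : Fin m → Ω → ℝ)
    (hmeas : ∀ i, Measurable (X i))
    (hindep : iIndepFun X ℙ)
    (hident : ∀ i, Measure.map (X i) ℙ = expMeasure l) :
    (∫ ω, ((⨆ i, X i ω) - ⨅ i, X i ω) ∂ℙ) /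
        (m * ∫ ω, X ⟨0, by omega⟩ ω ∂ℙ) =
      (1 / m) * ((∑ k ∈ Finset.Icc 1 m, (m.choose k : ℝ) * (-1) ^ (k + 1) / k) - 1 / m) := by
  haveI : Nonempty (Fin m) := ⟨⟨0, by omega⟩⟩
  set i0 : Fin m := ⟨0, by omega⟩ with hi0
  have hmap : ∀ (i : Fin m) (s : Set ℝ), MeasurableSet s → ℙ (X i ⁻¹' s) = expMeasure l s := by
    intro i s hs
    rw [← hident i, Measure.map_apply (hmeas i) hs]
  have hnn : ∀ i : Fin m, ∀ᵐ ω ∂ℙ, 0 ≤ X i ω := by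
    intro i
    have h0 : ℙ (X i ⁻¹' (Iio 0)) = 0 := by rw [hmap i _ measurableSet_Iio, aux_exp_Iio0 l]
    rw [ae_iff]
    simp only [not_le]; exact h0
  have hnn' : ∀ᵐ ω ∂ℙ, ∀ i, 0 ≤ X i ω := ae_all_iff.2 hnn
  -- tails
  have hIoi : ∀ (i : Fin m) {t : ℝ}, 0 ≤ t →
      ℙ {ω | t < X i ω} = ENNReal.ofReal (rexp (-(l * t))) := by
    intro i t ht
    have : {ω | t < X i ω} = X i ⁻¹' (Ioi t) := rfl
    rw [this, hmap i _ measurableSet_Ioi, aux_exp_Ioi hl ht]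
  -- measurability of sup and inf
  have hmeas_sup : Measurable (fun ω => ⨆ i, X i ω) := by
    have h : (fun ω => ⨆ i, X i ω) = Finset.univ.sup' Finset.univ_nonempty X := by
      funext ω
      rw [← Finset.sup'_univ_eq_ciSup, Finset.sup'_apply]
    rw [h]; exact Finset.measurable_sup' _ (fun i _ => hmeas i)
  have hmeas_inf : Measurable (fun ω => ⨅ i, X i ω) := by
    have h : (fun ω => ⨅ i, X i ω) = Finset.univ.inf' Finset.univ_nonempty X := by
      funext ω
      rw [← Finset.inf'_univ_eq_ciInf, Finset.inf'_apply]
    rw [h]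
    exact Finset.inf'_induction _ _ (fun f hf g hg => Measurable.inf hf hg) (fun i _ => hmeas i)
  -- tail of sup
  have he1 : ∀ {t : ℝ}, 0 ≤ t → rexp (-(l * t)) ≤ 1 := fun ht =>
    Real.exp_le_one_iff.mpr (neg_nonpos.mpr (mul_nonneg hl.le ht))
  have hsup_meas : ∀ {t : ℝ}, 0 ≤ t →
      ℙ {ω | t < ⨆ i, X i ω} = 1 - ENNReal.ofReal ((1 - rexp (-(l * t))) ^ m) := by
    intro t ht
    have hset : {ω | (⨆ i, X i ω) ≤ t} = ⋂ i, X i ⁻¹' (Iic t) := by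
      ext ω
      simp only [mem_setOf_eq, mem_iInter, mem_preimage, mem_Iic]
      exact ciSup_le_iff (Set.finite_range _).bddAbove
    have hc : {ω | t < ⨆ i, X i ω} = {ω | (⨆ i, X i ω) ≤ t}ᶜ := by
      ext ω; simp [not_le]
    have hprod : ℙ (⋂ i, X i ⁻¹' (Iic t)) = ∏ _i : Fin m, ENNReal.ofReal (1 - rexp (-(l * t))) := by
      rw [hindep.meas_iInter (fun i => ⟨Iic t, measurableSet_Iic, rfl⟩)]
      apply Finset.prod_congr rfl
      intro i _
      rw [hmap i _ measurableSet_Iic, aux_exp_Iic hl ht]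
    have hms : MeasurableSet {ω | (⨆ i, X i ω) ≤ t} := hmeas_sup measurableSet_Iic
    rw [hc, prob_compl_eq_one_sub hms, hset, hprod,
      Finset.prod_const, Finset.card_univ, Fintype.card_fin,
      ← ENNReal.ofReal_pow (by linarith [he1 ht])]
  -- tail of inf
  have hinf_meas : ∀ {t : ℝ}, 0 ≤ t →
      ℙ {ω | t < ⨅ i, X i ω} = ENNReal.ofReal (rexp (-(l * t)) ^ m) := by
    intro t ht
    have hset : {ω | t < ⨅ i, X i ω} = ⋂ i, X i ⁻¹' (Ioi t) := by
      ext ω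
      simp only [mem_setOf_eq, mem_iInter, mem_preimage, mem_Ioi]
      rw [← Finset.inf'_univ_eq_ciInf, Finset.lt_inf'_iff]
      simp
    rw [hset, hindep.meas_iInter (fun i => ⟨Ioi t, measurableSet_Ioi, rfl⟩)]
    have h : ∀ i : Fin m, ℙ (X i ⁻¹' (Ioi t)) = ENNReal.ofReal (rexp (-(l * t))) := by
      intro i; rw [hmap i _ measurableSet_Ioi, aux_exp_Ioi hl ht]
    rw [Finset.prod_congr rfl (fun i _ => h i), Finset.prod_const, Finset.card_univ,
      Fintype.card_fin, ← ENNReal.ofReal_pow (exp_pos _).le]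
  -- integrability
  have hexp_int : ∀ c : ℝ, 0 < c → IntegrableOn (fun x => rexp (-(c * x))) (Ioi (0:ℝ)) := by
    intro c hc
    simpa [neg_mul] using exp_neg_integrableOn_Ioi 0 hc
  have hXint : ∀ i, Integrable (X i) ℙ := by
    intro i
    refine ⟨(hmeas i).aestronglyMeasurable, ?_⟩
    rw [hasFiniteIntegral_iff_ofReal (hnn i)]
    rw [lintegral_eq_lintegral_meas_lt ℙ (hnn i) (hmeas i).aemeasurable]
    have hcong : ∀ᵐ t ∂(volume.restrict (Ioi (0:ℝ))),
        ℙ {a | t < X i a} = ENNReal.ofReal (rexp (-(l * t))) := by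
      filter_upwards [ae_restrict_mem measurableSet_Ioi] with t ht
      exact hIoi i ht.le
    rw [lintegral_congr_ae hcong,
      ← ofReal_integral_eq_lintegral_ofReal (hexp_int l hl) (ae_of_all _ fun t => (exp_pos _).le)]
    exact ENNReal.ofReal_lt_top
  have hsum_int : Integrable (fun ω => ∑ i, X i ω) ℙ :=
    integrable_finset_sum _ (fun i _ => hXint i)
  have hsup_int : Integrable (fun ω => ⨆ i, X i ω) ℙ := by
    refine hsum_int.mono' hmeas_sup.aestronglyMeasurable ?_
    filter_upwards [hnn'] with ω hω
    rw [Real.norm_of_nonneg ((hω i0).trans (le_ciSup (f := fun i => X i ω) (Set.finite_range _).bddAbove i0))]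
    exact ciSup_le fun i =>
      Finset.single_le_sum (f := fun j => X j ω) (fun j _ => hω j) (Finset.mem_univ i)
  have hinf_int : Integrable (fun ω => ⨅ i, X i ω) ℙ := by
    refine (hXint i0).mono' hmeas_inf.aestronglyMeasurable ?_
    filter_upwards [hnn'] with ω hω
    rw [Real.norm_of_nonneg (le_ciInf fun i => hω i)]
    exact ciInf_le (Set.finite_range _).bddBelow i0
  have hsup_nn : ∀ᵐ ω ∂ℙ, 0 ≤ ⨆ i, X i ω := by
    filter_upwards [hnn'] with ω hω
    exact (hω i0).trans (le_ciSup (f := fun i => X i ω) (Set.finite_range _).bddAbove i0)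
  have hinf_nn : ∀ᵐ ω ∂ℙ, 0 ≤ ⨅ i, X i ω := by
    filter_upwards [hnn'] with ω hω
    exact le_ciInf fun i => hω i
  -- mean of X i0
  have EX : ∫ ω, X i0 ω ∂ℙ = 1 / l := by
    rw [(hXint i0).integral_eq_integral_meas_lt (hnn i0)]
    rw [setIntegral_congr_fun measurableSet_Ioi
      (g := fun t => rexp (-(l * t)))
      (fun t ht => by rw [measureReal_def, hIoi i0 (le_of_lt ht), ENNReal.toReal_ofReal (exp_pos _).le]),
      aux_int_exp' l 0 hl]
    norm_num
  -- mean of sup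
  have Emax : ∫ ω, (⨆ i, X i ω) ∂ℙ
      = ∑ k ∈ Finset.Icc 1 m, (m.choose k : ℝ) * (-1) ^ (k + 1) / (k * l) := by
    rw [hsup_int.integral_eq_integral_meas_lt hsup_nn]
    rw [setIntegral_congr_fun measurableSet_Ioi
      (g := fun t => ∑ k ∈ Finset.Icc 1 m,
        (m.choose k : ℝ) * (-1) ^ (k + 1) * rexp (-((k * l) * t)))
      (fun t ht => by
        have ht' : (0:ℝ) ≤ t := le_of_lt ht
        rw [measureReal_def, hsup_meas ht', ENNReal.toReal_sub_of_le
          (ENNReal.ofReal_le_one.2 (pow_le_one₀ (by linarith [he1 ht'])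
            (by linarith [Real.exp_pos (-(l * t))])))
          ENNReal.one_ne_top,
          ENNReal.toReal_one, ENNReal.toReal_ofReal (pow_nonneg (by linarith [he1 ht']) m),
          aux_binom m]
        apply Finset.sum_congr rfl
        intro k _
        rw [← Real.exp_nat_mul]
        congr 1
        ring_nf)]
    rw [integral_finset_sum _ (fun k hk => by
      have hk1 : 1 ≤ k := (Finset.mem_Icc.1 hk).1
      have hkl : 0 < (k : ℝ) * l := mul_pos (by exact_mod_cast hk1) hl
      exact ((hexp_int _ hkl).const_mul _))]
    apply Finset.sum_congr rfl
    intro k hk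
    have hk1 : 1 ≤ k := (Finset.mem_Icc.1 hk).1
    have hkl : 0 < (k : ℝ) * l := mul_pos (by exact_mod_cast hk1) hl
    rw [integral_const_mul, aux_int_exp' _ 0 hkl]
    norm_num
    ring_nf
  -- mean of inf
  have Emin : ∫ ω, (⨅ i, X i ω) ∂ℙ = 1 / (m * l) := by
    rw [hinf_int.integral_eq_integral_meas_lt hinf_nn]
    have hml : 0 < (m : ℝ) * l := mul_pos (by exact_mod_cast (by omega : 0 < m)) hl
    rw [setIntegral_congr_fun measurableSet_Ioi
      (g := fun t => rexp (-((m * l) * t)))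
      (fun t ht => by
        rw [measureReal_def, hinf_meas (le_of_lt ht), ENNReal.toReal_ofReal (by positivity),
          ← Real.exp_nat_mul]
        congr 1
        ring),
      aux_int_exp' _ 0 hml]
    norm_num
  -- put it together
  rw [integral_sub hsup_int hinf_int, Emax, Emin, EX]
  have hS : ∑ k ∈ Finset.Icc 1 m, (m.choose k : ℝ) * (-1) ^ (k + 1) / (k * l)
      = (∑ k ∈ Finset.Icc 1 m, (m.choose k : ℝ) * (-1) ^ (k + 1) / k) / l := by
    rw [Finset.sum_div]
    exact Finset.sum_congr rfl fun k _ => by rw [div_div]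
  rw [hS]
  have hm0 : (m : ℝ) ≠ 0 := Nat.cast_ne_zero.mpr (by omega)
  have hl0 : l ≠ 0 := hl.ne'
  field_simp
end

section
/- For every α > 0, ∫₀^∞ Γ(α,s)² ds = α Γ(α)² − Γ(2α+1)/(2^{2α} α), where Γ(α,s) = ∫_s^∞ t^{α−1} e^{−t} dt is the upper incomplete gamma function and Γ is the gamma function. -/
open MeasureTheory Set

open Filter

/-- The upper incomplete gamma function `Γ(a, x) = ∫_x^∞ t^(a−1) e^(−t) dt`. -/
noncomputable def upperIncompleteGamma (a x : ℝ) : ℝ :=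
  ∫ t in Ioi x, t ^ (a - 1) * Real.exp (-t)

lemma uig_integrableOn {a : ℝ} (ha : 0 < a) {x : ℝ} (hx : 0 ≤ x) :
    IntegrableOn (fun t : ℝ => t ^ (a - 1) * Real.exp (-t)) (Ioi x) := by
  refine ((Real.GammaIntegral_convergent ha).mono_set (Ioi_subset_Ioi hx)).congr_fun
    (fun t _ => mul_comm _ _) measurableSet_Ioi

lemma uig_zero {a : ℝ} (ha : 0 < a) : upperIncompleteGamma a 0 = Real.Gamma a := by
  rw [upperIncompleteGamma, Real.Gamma_eq_integral ha]
  exact setIntegral_congr_fun measurableSet_Ioi (fun t _ => mul_comm _ _)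

lemma uig_eq_sub {a : ℝ} (ha : 0 < a) {x : ℝ} (hx : 0 ≤ x) :
    upperIncompleteGamma a x =
      Real.Gamma a - ∫ t in (0:ℝ)..x, t ^ (a - 1) * Real.exp (-t) := by
  rw [← uig_zero ha, intervalIntegral.integral_of_le hx, eq_sub_iff_add_eq]
  rw [upperIncompleteGamma, upperIncompleteGamma, add_comm]
  rw [← setIntegral_union (Ioc_disjoint_Ioi le_rfl) measurableSet_Ioi
    ((uig_integrableOn ha le_rfl).mono_set Ioc_subset_Ioi_self) (uig_integrableOn ha hx)]
  rw [Ioc_union_Ioi_eq_Ioi hx]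

lemma uig_hasDerivAt {a : ℝ} (ha : 0 < a) {x : ℝ} (hx : 0 < x) :
    HasDerivAt (upperIncompleteGamma a) (-(x ^ (a - 1) * Real.exp (-x))) x := by
  have hcont : ContinuousAt (fun t : ℝ => t ^ (a - 1) * Real.exp (-t)) x :=
    ((Real.continuousAt_rpow_const x (a-1) (Or.inl hx.ne')).mul
      ((Real.continuous_exp.comp continuous_neg).continuousAt))
  have hii : IntervalIntegrable (fun t : ℝ => t ^ (a - 1) * Real.exp (-t)) volume 0 x := by
    rw [intervalIntegrable_iff_integrableOn_Ioc_of_le hx.le]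
    exact (uig_integrableOn ha le_rfl).mono_set Ioc_subset_Ioi_self
  have hcontOn : ContinuousOn (fun t : ℝ => t ^ (a - 1) * Real.exp (-t)) (Ioi 0) := by
    intro t ht
    exact (((Real.continuousAt_rpow_const t (a-1) (Or.inl (ne_of_gt ht))).mul
      ((Real.continuous_exp.comp continuous_neg).continuousAt))).continuousWithinAt
  have hmeas : StronglyMeasurableAtFilter (fun t : ℝ => t ^ (a - 1) * Real.exp (-t)) (nhds x) :=
    hcontOn.stronglyMeasurableAtFilter isOpen_Ioi x hx
  have hD := (intervalIntegral.integral_hasDerivAt_right hii hmeas hcont).const_sub (Real.Gamma a)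
  refine HasDerivAt.congr_of_eventuallyEq hD ?_
  filter_upwards [Ioi_mem_nhds hx] with y hy
  exact uig_eq_sub ha (le_of_lt hy)

lemma uig_tendsto {a : ℝ} (ha : 0 < a) :
    Tendsto (upperIncompleteGamma a) atTop (nhds 0) := by
  have h1 : Tendsto (fun x : ℝ => ∫ t in (0:ℝ)..x, t ^ (a - 1) * Real.exp (-t)) atTop
      (nhds (upperIncompleteGamma a 0)) :=
    intervalIntegral_tendsto_integral_Ioi 0 (uig_integrableOn ha le_rfl) tendsto_id
  have h2 : Tendsto (fun x : ℝ => Real.Gamma a - ∫ t in (0:ℝ)..x, t ^ (a - 1) * Real.exp (-t))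
      atTop (nhds (Real.Gamma a - upperIncompleteGamma a 0)) :=
    (tendsto_const_nhds).sub h1
  rw [uig_zero ha, sub_self] at h2
  refine h2.congr' ?_
  filter_upwards [eventually_ge_atTop (0:ℝ)] with x hx
  exact (uig_eq_sub ha hx).symm

lemma uig_nonneg {a x : ℝ} (hx : 0 ≤ x) : 0 ≤ upperIncompleteGamma a x := by
  refine setIntegral_nonneg measurableSet_Ioi (fun t ht => ?_)
  have ht' : 0 < t := lt_of_le_of_lt hx ht
  positivity

lemma uig_aux_integrable {a : ℝ} (ha : 0 < a) :
    IntegrableOn (fun t : ℝ => t ^ (a - 1) * Real.exp (-(2⁻¹) * t)) (Ioi 0) := by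
  have h := integrableOn_rpow_mul_exp_neg_mul_rpow (p := 1) (s := a - 1) (b := 2⁻¹)
    (by linarith) (by norm_num) (by norm_num)
  refine h.congr_fun (fun t _ => ?_) measurableSet_Ioi
  simp only [Real.rpow_one]

lemma uig_le {a : ℝ} (ha : 0 < a) {x : ℝ} (hx : 0 ≤ x) :
    upperIncompleteGamma a x ≤
      (∫ t in Ioi (0:ℝ), t ^ (a - 1) * Real.exp (-(2⁻¹) * t)) * Real.exp (-(2⁻¹) * x) := by
  have hI := uig_aux_integrable ha
  calc upperIncompleteGamma a x
      ≤ ∫ t in Ioi x, (t ^ (a - 1) * Real.exp (-(2⁻¹) * t)) * Real.exp (-(2⁻¹) * x) := by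
        refine setIntegral_mono_on (uig_integrableOn ha hx)
          ((hI.mono_set (Ioi_subset_Ioi hx)).mul_const _) measurableSet_Ioi (fun t ht => ?_)
        have ht0 : 0 < t := lt_of_le_of_lt hx ht
        have he : Real.exp (-t) = Real.exp (-(2⁻¹) * t) * Real.exp (-(2⁻¹) * t) := by
          rw [← Real.exp_add]; ring_nf
        rw [he, ← mul_assoc]
        have ht' : x ≤ t := le_of_lt ht
        exact mul_le_mul_of_nonneg_left (Real.exp_le_exp.mpr (by linarith)) (by positivity)
    _ = (∫ t in Ioi x, t ^ (a - 1) * Real.exp (-(2⁻¹) * t)) * Real.exp (-(2⁻¹) * x) :=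
        integral_mul_const _ _
    _ ≤ (∫ t in Ioi (0:ℝ), t ^ (a - 1) * Real.exp (-(2⁻¹) * t)) * Real.exp (-(2⁻¹) * x) := by
        refine mul_le_mul_of_nonneg_right (setIntegral_mono_set hI ?_
          ((Ioi_subset_Ioi hx).eventuallyLE)) (Real.exp_pos _).le
        filter_upwards [self_mem_ae_restrict (measurableSet_Ioi : MeasurableSet (Ioi (0:ℝ)))]
          with t ht
        have : (0:ℝ) < t := ht
        positivity

lemma uig_continuousWithinAt {a : ℝ} (ha : 0 < a) :
    ContinuousWithinAt (upperIncompleteGamma a) (Ici 0) 0 := by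
  have hint : IntegrableOn (fun t : ℝ => t ^ (a - 1) * Real.exp (-t)) (Icc 0 1) := by
    rw [integrableOn_Icc_iff_integrableOn_Ioc]
    exact (uig_integrableOn ha le_rfl).mono_set Ioc_subset_Ioi_self
  have hc : ContinuousOn (fun x : ℝ => ∫ t in Ioc 0 x, t ^ (a - 1) * Real.exp (-t)) (Icc 0 1) :=
    intervalIntegral.continuousOn_primitive hint
  have hc2 : ContinuousWithinAt
      (fun x : ℝ => Real.Gamma a - ∫ t in Ioc 0 x, t ^ (a - 1) * Real.exp (-t)) (Icc 0 1) 0 :=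
    (continuousWithinAt_const).sub (hc 0 (by norm_num))
  have heq : ∀ x ∈ Icc (0:ℝ) 1, upperIncompleteGamma a x
      = Real.Gamma a - ∫ t in Ioc 0 x, t ^ (a - 1) * Real.exp (-t) := by
    intro x hx
    rw [uig_eq_sub ha hx.1, intervalIntegral.integral_of_le hx.1]
  have hc3 : ContinuousWithinAt (upperIncompleteGamma a) (Icc 0 1) 0 :=
    hc2.congr heq (heq 0 (by norm_num))
  refine hc3.mono_of_mem_nhdsWithin ?_
  rw [mem_nhdsWithin]
  exact ⟨Iio 1, isOpen_Iio, by norm_num, fun y hy => ⟨hy.2, hy.1.le⟩⟩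

lemma uig_rec {a : ℝ} (ha : 0 < a) {x : ℝ} (hx : 0 < x) :
    upperIncompleteGamma (a + 1) x
      = a * upperIncompleteGamma a x + x ^ a * Real.exp (-x) := by
  have key : ∫ s in Ioi x, s ^ ((a + 1) - 1) * Real.exp (-s)
      = 0 - (-(x ^ a * Real.exp (-x) + a * upperIncompleteGamma a x)) := by
    refine integral_Ioi_of_hasDerivAt_of_tendsto'
      (f := fun s => -(s ^ a * Real.exp (-s) + a * upperIncompleteGamma a s)) ?_ ?_ ?_
    · intro s hs
      have hs0 : 0 < s := lt_of_lt_of_le hx hs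
      have h1 : HasDerivAt (fun s : ℝ => s ^ a) (a * s ^ (a - 1)) s :=
        Real.hasDerivAt_rpow_const (Or.inl hs0.ne')
      have h2 : HasDerivAt (fun s : ℝ => Real.exp (-s)) (-Real.exp (-s)) s := by
        simpa [Function.comp_def] using (Real.hasDerivAt_exp (-s)).comp s (hasDerivAt_neg s)
      have h4 := (uig_hasDerivAt ha hs0).const_mul a
      have h5 := ((h1.mul h2).add h4).neg
      have hval : s ^ ((a + 1) - 1) * Real.exp (-s)
          = -(a * s ^ (a-1) * Real.exp (-s) + s ^ a * -Real.exp (-s)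
              + a * -(s ^ (a-1) * Real.exp (-s))) := by
        rw [add_sub_cancel_right]; ring
      rw [hval]
      exact h5
    · have := uig_integrableOn (by linarith : (0:ℝ) < a + 1) hx.le
      exact this
    · have ht1 : Tendsto (fun s : ℝ => s ^ a * Real.exp (-s)) atTop (nhds 0) := by
        have := tendsto_rpow_mul_exp_neg_mul_atTop_nhds_zero a 1 one_pos
        refine this.congr (fun s => by norm_num)
      have ht2 := (uig_tendsto ha).const_mul a
      have := (ht1.add ht2).neg
      simpa using this
  have : upperIncompleteGamma (a + 1) x
      = ∫ s in Ioi x, s ^ ((a + 1) - 1) * Real.exp (-s) := rfl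
  rw [this, key]; ring

/-- For `α > 0`, `∫₀^∞ Γ(α,s)² ds = α Γ(α)² − Γ(2α+1)/(2^(2α) α)`. -/
theorem integral_upperIncompleteGamma_sq (α : ℝ) (hα : 0 < α) :
    ∫ s in Ioi (0 : ℝ), upperIncompleteGamma α s ^ 2 =
      α * Real.Gamma α ^ 2 - Real.Gamma (2 * α + 1) / ((2 : ℝ) ^ (2 * α) * α) := by
  have hα1 : (0:ℝ) < α + 1 := by linarith
  have h2α : (0:ℝ) < 2 * α := by linarith
  set c : ℝ := (2:ℝ) ^ ((1:ℝ) - 2 * α) with hc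
  set C : ℝ := ∫ t in Ioi (0:ℝ), t ^ (α - 1) * Real.exp (-(2⁻¹) * t) with hC
  set F : ℝ → ℝ := fun s => s * upperIncompleteGamma α s ^ 2
      - 2 * upperIncompleteGamma (α + 1) s * upperIncompleteGamma α s
      + α * upperIncompleteGamma α s ^ 2
      + c * upperIncompleteGamma (2 * α) (2 * s) with hF
  -- derivative
  have hderiv : ∀ s ∈ Ioi (0:ℝ), HasDerivAt F (upperIncompleteGamma α s ^ 2) s := by
    intro s hs
    have hs0 : 0 < s := hs
    have hG := uig_hasDerivAt hα hs0
    have hG1 := uig_hasDerivAt hα1 hs0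
    have hG2 := uig_hasDerivAt h2α (by linarith : (0:ℝ) < 2 * s)
    have hinner : HasDerivAt (fun s : ℝ => 2 * s) 2 s := by
      simpa using (hasDerivAt_id s).const_mul 2
    have hcomp := hG2.comp s hinner
    have hsq := hG.pow 2
    have t1 := (hasDerivAt_id s).mul hsq
    have t2 := (hG1.mul hG).const_mul 2
    have t3 := hsq.const_mul α
    have t4 := hcomp.const_mul c
    have hFd := ((t1.sub t2).add t3).add t4
    have hα1s : s ^ (α + 1 - 1) = s ^ α := by norm_num
    have hrec := uig_rec hα hs0
    have e2 : Real.exp (-(2 * s)) = Real.exp (-s) * Real.exp (-s) := by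
      rw [← Real.exp_add]; ring_nf
    have hq : (2 * s) ^ (2 * α - 1) = 2 ^ (2 * α - 1) * s ^ (2 * α - 1) :=
      Real.mul_rpow (by norm_num) hs0.le
    have hqq : s ^ (2 * α - 1) = s ^ (α - 1) * s ^ α := by
      rw [← Real.rpow_add hs0]; ring_nf
    have hP : s * s ^ (α - 1) = s ^ α := by
      rw [mul_comm, ← Real.rpow_add_one hs0.ne']; norm_num
    have hcd : c * (2:ℝ) ^ (2 * α - 1) = 1 := by
      rw [hc, ← Real.rpow_add two_pos]; norm_num
    refine HasDerivAt.congr_deriv (hFd.congr_of_eventuallyEq (Filter.Eventually.of_forall fun x => ?_)) (Eq.symm ?_)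
    · simp only [hF, Function.comp_apply, id_eq, Pi.pow_apply, Pi.add_apply, Pi.sub_apply, Pi.mul_apply]; ring
    · simp only [id_eq, Pi.pow_apply]
      rw [hα1s, hrec, e2, hq, hqq]
      linear_combination (2 * Real.exp (-s) * upperIncompleteGamma α s) * hP
        + (2 * s ^ α * s ^ (α - 1) * Real.exp (-s) ^ 2) * hcd
  -- continuity at 0
  have hmap : MapsTo (fun s : ℝ => 2 * s) (Ici 0) (Ici 0) := fun y hy => by
    simp only [mem_Ici] at *; linarith
  have h20 : ((fun s : ℝ => 2 * s) 0) = 0 := by norm_num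
  have cG2 : ContinuousWithinAt (fun s : ℝ => upperIncompleteGamma (2 * α) (2 * s))
      (Ici 0) 0 := by
    have hbase' : ContinuousWithinAt (upperIncompleteGamma (2 * α)) (Ici 0)
        ((fun s : ℝ => 2 * s) 0) := by
      norm_num
      exact uig_continuousWithinAt h2α
    have hlin : ContinuousWithinAt (fun s : ℝ => 2 * s) (Ici 0) 0 :=
      (continuous_const.mul continuous_id).continuousWithinAt
    have := hbase'.comp hlin hmap
    simpa [Function.comp_def] using this
  have cG := uig_continuousWithinAt hα
  have cG1 := uig_continuousWithinAt hα1
  have hcont : ContinuousWithinAt F (Ici 0) 0 :=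
    (((continuousWithinAt_id.mul (cG.pow 2)).sub
      ((continuousWithinAt_const.mul cG1).mul cG)).add
      (continuousWithinAt_const.mul (cG.pow 2))).add (continuousWithinAt_const.mul cG2)
  -- integrability of the square
  have cOn : ContinuousOn (upperIncompleteGamma α) (Ioi 0) := fun t ht =>
    (uig_hasDerivAt hα ht).continuousAt.continuousWithinAt
  have hexpint : IntegrableOn (fun s : ℝ => C ^ 2 * Real.exp (-s)) (Ioi 0) := by
    have h1 : IntegrableOn (fun x : ℝ => Real.exp (-x)) (Ioi (0:ℝ)) := by
      have h0 := exp_neg_integrableOn_Ioi (0:ℝ) one_pos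
      refine h0.congr_fun (fun t _ => by norm_num) measurableSet_Ioi
    exact h1.const_mul _
  have f'int : IntegrableOn (fun s : ℝ => upperIncompleteGamma α s ^ 2) (Ioi 0) := by
    refine Integrable.mono' hexpint ((cOn.pow 2).aestronglyMeasurable measurableSet_Ioi) ?_
    filter_upwards [self_mem_ae_restrict (measurableSet_Ioi : MeasurableSet (Ioi (0:ℝ)))]
      with s hs
    have hs0 : (0:ℝ) < s := hs
    have hb := uig_le hα hs0.le
    have hnn := uig_nonneg (a := α) hs0.le
    rw [Real.norm_eq_abs, abs_of_nonneg (by positivity)]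
    calc upperIncompleteGamma α s ^ 2 ≤ (C * Real.exp (-(2⁻¹) * s)) ^ 2 :=
          pow_le_pow_left₀ hnn hb 2
      _ = C ^ 2 * Real.exp (-s) := by
          rw [mul_pow, sq (Real.exp _), ← Real.exp_add]; ring_nf
  -- limit at infinity
  have hse : Tendsto (fun s : ℝ => s * Real.exp (-s)) atTop (nhds 0) := by
    have := tendsto_rpow_mul_exp_neg_mul_atTop_nhds_zero 1 1 one_pos
    refine this.congr (fun s => by rw [Real.rpow_one]; norm_num)
  have t1 : Tendsto (fun s : ℝ => s * upperIncompleteGamma α s ^ 2) atTop (nhds 0) := by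
    refine squeeze_zero' ?_ ?_ (by simpa using hse.const_mul (C ^ 2))
    · filter_upwards [eventually_ge_atTop (0:ℝ)] with s hs0
      positivity
    · filter_upwards [eventually_ge_atTop (0:ℝ)] with s hs0
      have hb := uig_le hα hs0
      have hnn := uig_nonneg (a := α) hs0
      calc s * upperIncompleteGamma α s ^ 2 ≤ s * (C * Real.exp (-(2⁻¹) * s)) ^ 2 := by
            exact mul_le_mul_of_nonneg_left (pow_le_pow_left₀ hnn hb 2) hs0
        _ = C ^ 2 * (s * Real.exp (-s)) := by
            rw [mul_pow, sq (Real.exp _), ← Real.exp_add]; ring_nf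
  have t2 : Tendsto (fun s : ℝ => 2 * upperIncompleteGamma (α + 1) s
      * upperIncompleteGamma α s) atTop (nhds 0) := by
    simpa using ((uig_tendsto hα1).const_mul 2).mul (uig_tendsto hα)
  have t3 : Tendsto (fun s : ℝ => α * upperIncompleteGamma α s ^ 2) atTop (nhds 0) := by
    have := ((uig_tendsto hα).mul (uig_tendsto hα)).const_mul α
    simp only [mul_zero] at this
    refine this.congr (fun s => by ring)
  have t4 : Tendsto (fun s : ℝ => c * upperIncompleteGamma (2 * α) (2 * s)) atTop (nhds 0) := by
    have h2s : Tendsto (fun s : ℝ => 2 * s) atTop atTop :=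
      Tendsto.const_mul_atTop two_pos tendsto_id
    simpa using ((uig_tendsto h2α).comp h2s).const_mul c
  have hf : Tendsto F atTop (nhds 0) := by
    have := ((t1.sub t2).add t3).add t4
    simpa using this
  have key := integral_Ioi_of_hasDerivAt_of_tendsto hcont hderiv f'int hf
  rw [key]
  have hF0 : F 0 = -(α * Real.Gamma α ^ 2) + c * Real.Gamma (2 * α) := by
    rw [hF]
    simp only [mul_zero, zero_mul]
    rw [uig_zero hα, uig_zero hα1, uig_zero h2α, Real.Gamma_add_one hα.ne']
    ring
  rw [hF0, Real.Gamma_add_one h2α.ne']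
  have hc2 : c * (2:ℝ) ^ (2 * α) = 2 := by
    rw [hc, ← Real.rpow_add two_pos]; norm_num
  have hpow : (0:ℝ) < (2:ℝ) ^ (2 * α) := Real.rpow_pos_of_pos two_pos _
  have h2 : 2 * α * Real.Gamma (2 * α) / ((2:ℝ) ^ (2 * α) * α) = c * Real.Gamma (2 * α) := by
    rw [div_eq_iff (by positivity : ((2:ℝ) ^ (2 * α) * α) ≠ 0)]
    linear_combination (-(α * Real.Gamma (2 * α))) * hc2
  rw [h2]; ring
end

section
/- For every α > 0, ∫₀^∞ ( Γ(α)² − γ(α,s)² ) ds = α Γ(α)² + Γ(2α+1)/(2^{2α} α), where γ(α,s) = ∫₀^s t^{α−1} e^{−t} dt is the lower incomplete gamma function and Γ is the gamma function. -/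
open MeasureTheory Set Real Filter
open scoped ENNReal

/-- The lower incomplete gamma function `γ(a, x) = ∫₀^x t^(a−1) e^(−t) dt`. -/
noncomputable def lowerIncompleteGamma (a x : ℝ) : ℝ :=
  ∫ t in Ioc (0 : ℝ) x, t ^ (a - 1) * Real.exp (-t)

namespace Work



lemma partialGamma_ofReal (a : ℝ) {X : ℝ} (hX : 0 ≤ X) :
    Complex.partialGamma (a : ℂ) X = (lowerIncompleteGamma a X : ℂ) := by
  rw [Complex.partialGamma, intervalIntegral.integral_of_le hX, lowerIncompleteGamma]
  calc ∫ x in Ioc (0:ℝ) X, (Real.exp (-x) : ℂ) * (x:ℂ) ^ ((a:ℂ) - 1)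
      = ∫ x in Ioc (0:ℝ) X, ((x ^ (a - 1) * Real.exp (-x) : ℝ) : ℂ) := by
        refine setIntegral_congr_fun measurableSet_Ioc (fun x hx => ?_)
        rw [show ((a:ℂ) - 1) = ((a - 1 : ℝ) : ℂ) by push_cast; ring,
          ← Complex.ofReal_cpow hx.1.le]
        push_cast
        ring
    _ = ((∫ x in Ioc (0:ℝ) X, x ^ (a - 1) * Real.exp (-x) : ℝ) : ℂ) := integral_ofReal

lemma lig_succ (ha : 0 < α) {X : ℝ} (hX : 0 ≤ X) :
    lowerIncompleteGamma (α + 1) X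
      = α * lowerIncompleteGamma α X - X ^ α * Real.exp (-X) := by
  have h := Complex.partialGamma_add_one (s := (α : ℂ)) (by simpa using ha) hX
  rw [show ((α : ℂ) + 1) = ((α + 1 : ℝ) : ℂ) by push_cast; ring] at h
  rw [partialGamma_ofReal (α + 1) hX, partialGamma_ofReal α hX] at h
  rw [← Complex.ofReal_cpow hX] at h
  have : (lowerIncompleteGamma (α + 1) X : ℂ)
      = ((α * lowerIncompleteGamma α X - X ^ α * Real.exp (-X) : ℝ) : ℂ) := by
    rw [h]; push_cast; ring
  exact_mod_cast this



noncomputable def f (α t : ℝ) : ℝ := t ^ (α - 1) * Real.exp (-t)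

lemma f_meas (α : ℝ) : Measurable (f α) := by unfold f; fun_prop

lemma f_nonneg {α t : ℝ} (ht : 0 < t) : 0 ≤ f α t :=
  mul_nonneg (rpow_nonneg ht.le _) (exp_pos _).le

variable {α : ℝ}

lemma f_int (hα : 0 < α) : IntegrableOn (f α) (Ioi 0) :=
  (Real.GammaIntegral_convergent hα).congr_fun (fun x _ => mul_comm _ _) measurableSet_Ioi

lemma Gamma_eq (hα : 0 < α) : Real.Gamma α = ∫ t in Ioi (0:ℝ), f α t := by
  rw [Real.Gamma_eq_integral hα]
  exact setIntegral_congr_fun measurableSet_Ioi (fun x _ => mul_comm _ _)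

lemma G_eq (α s : ℝ) : lowerIncompleteGamma α s = ∫ t in Ioc (0:ℝ) s, f α t := rfl

lemma G_nonneg (α s : ℝ) : 0 ≤ lowerIncompleteGamma α s :=
  setIntegral_nonneg measurableSet_Ioc (fun t ht => f_nonneg ht.1)

lemma f_ae_nonneg {S : Set ℝ} (hS : MeasurableSet S) (h : S ⊆ Ioi 0) :
    0 ≤ᵐ[volume.restrict S] f α := by
  filter_upwards [self_mem_ae_restrict hS] with t ht
  exact f_nonneg (h ht)

lemma G_mono (hα : 0 < α) : Monotone (lowerIncompleteGamma α) := by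
  intro s s' hss
  rw [G_eq, G_eq]
  exact setIntegral_mono_set ((f_int hα).mono_set Ioc_subset_Ioi_self)
    (f_ae_nonneg measurableSet_Ioc (fun t ht => ht.1))
    (HasSubset.Subset.eventuallyLE (Ioc_subset_Ioc_right hss))

lemma G_le (hα : 0 < α) (s : ℝ) : lowerIncompleteGamma α s ≤ Real.Gamma α := by
  rw [G_eq, Gamma_eq hα]
  exact setIntegral_mono_set (f_int hα) (f_ae_nonneg measurableSet_Ioi (fun t ht => ht))
    (HasSubset.Subset.eventuallyLE Ioc_subset_Ioi_self)

lemma G_meas (hα : 0 < α) : Measurable (lowerIncompleteGamma α) := (G_mono hα).measurable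

/-- FTC-1: derivative of G at positive points. -/
lemma G_hasDeriv (hα : 0 < α) {u : ℝ} (hu : 0 < u) :
    HasDerivAt (lowerIncompleteGamma α) (f α u) u := by
  set a := u / 2 with ha
  have ha0 : 0 < a := by positivity
  have hau : a < u := by simp [ha]; linarith
  have hint : IntervalIntegrable (f α) volume a u := by
    rw [intervalIntegrable_iff_integrableOn_Ioc_of_le hau.le]
    exact (f_int hα).mono_set (fun t ht => lt_trans ha0 ht.1)
  have hcont : ContinuousAt (f α) u := by
    have h1 : ContinuousAt (fun t : ℝ => t ^ (α - 1)) u :=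
      Real.continuousAt_rpow_const u (α - 1) (Or.inl hu.ne')
    exact h1.mul ((Real.continuous_exp.comp continuous_neg).continuousAt)
  have hD : HasDerivAt (fun v => ∫ t in a..v, f α t) (f α u) u :=
    intervalIntegral.integral_hasDerivAt_right hint
      (f_meas α).stronglyMeasurable.stronglyMeasurableAtFilter hcont
  have heq : ∀ᶠ v in nhds u, lowerIncompleteGamma α v
      = lowerIncompleteGamma α a + ∫ t in a..v, f α t := by
    filter_upwards [eventually_gt_nhds hau] with v hv
    rw [intervalIntegral.integral_of_le hv.le, G_eq, G_eq,
      ← setIntegral_union (Ioc_disjoint_Ioc_of_le le_rfl) measurableSet_Ioc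
        ((f_int hα).mono_set Ioc_subset_Ioi_self)
        ((f_int hα).mono_set (fun t ht => lt_trans ha0 ht.1)),
      Ioc_union_Ioc_eq_Ioc ha0.le hv.le]
  exact (hD.const_add (lowerIncompleteGamma α a)).congr_of_eventuallyEq heq |>.congr_deriv rfl


lemma int_upow (hα : 0 < α) : IntegrableOn (fun u : ℝ => u ^ α * Real.exp (-u)) (Ioi 0) := by
  have h := f_int (α := α + 1) (by linarith)
  refine h.congr_fun (fun x _ => ?_) measurableSet_Ioi
  unfold f; norm_num

lemma int_2exp (hα : 0 < α) :
    IntegrableOn (fun u : ℝ => u ^ (2*α - 1) * Real.exp (-(2*u))) (Ioi 0) := by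
  refine Integrable.mono' (f_int (α := 2*α) (by linarith)) ?_ ?_
  · apply Measurable.aestronglyMeasurable; fun_prop
  · filter_upwards [self_mem_ae_restrict measurableSet_Ioi] with u hu
    have hu' : (0:ℝ) < u := hu
    rw [norm_mul, Real.norm_eq_abs, Real.norm_eq_abs, abs_of_pos (exp_pos _),
      abs_rpow_of_nonneg hu'.le, abs_of_pos hu']
    unfold f
    have : Real.exp (-(2*u)) ≤ Real.exp (-u) := Real.exp_le_exp.2 (by linarith)
    exact mul_le_mul_of_nonneg_left this (rpow_nonneg hu'.le _)

lemma int_fG (hα : 0 < α) :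
    IntegrableOn (fun u : ℝ => (u - α) * f α u * lowerIncompleteGamma α u) (Ioi 0) := by
  refine Integrable.mono'
    (((int_upow hα).const_mul (Real.Gamma α)).add ((f_int hα).const_mul (Real.Gamma α * α))) ?_ ?_
  · exact (((measurable_id.sub_const α).mul (f_meas α)).mul (G_meas hα)).aestronglyMeasurable
  · filter_upwards [self_mem_ae_restrict measurableSet_Ioi] with u hu
    have hu' : (0:ℝ) < u := hu
    have h1 : 0 ≤ f α u := f_nonneg hu
    have h2 : 0 ≤ lowerIncompleteGamma α u := G_nonneg α u
    have h3 : lowerIncompleteGamma α u ≤ Real.Gamma α := G_le hα u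
    have h4 : |u - α| ≤ u + α := by
      rw [abs_le]; constructor <;> nlinarith
    rw [norm_mul, norm_mul, Real.norm_eq_abs, Real.norm_eq_abs, Real.norm_eq_abs,
      abs_of_nonneg h1, abs_of_nonneg h2]
    have : |u - α| * f α u * lowerIncompleteGamma α u ≤ (u + α) * f α u * Real.Gamma α := by
      apply mul_le_mul (by apply mul_le_mul h4 le_rfl h1 (by linarith)) h3 h2
      exact mul_nonneg (by linarith) h1
    refine this.trans (le_of_eq ?_)
    have hup : u ^ α = u ^ (α - 1) * u := by
      rw [← Real.rpow_add_one (ne_of_gt hu')]; norm_num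
    unfold f
    simp only [Pi.add_apply]
    rw [hup]; ring

lemma psi_deriv (hα : 0 < α) {u : ℝ} (hu : 0 < u) :
    HasDerivAt (fun u => u ^ α * Real.exp (-u) * lowerIncompleteGamma α u)
      ((α - u) * f α u * lowerIncompleteGamma α u + u ^ (2*α - 1) * Real.exp (-(2*u))) u := by
  have h1 : HasDerivAt (fun u : ℝ => u ^ α) (α * u ^ (α - 1)) u :=
    Real.hasDerivAt_rpow_const (Or.inl hu.ne')
  have h2 : HasDerivAt (fun u : ℝ => Real.exp (-u)) (-Real.exp (-u)) u := by
    simpa using (hasDerivAt_neg u).exp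
  have h3 := G_hasDeriv hα hu
  have h := (h1.mul h2).mul h3
  refine h.congr_deriv ?_
  simp only [Pi.mul_apply]
  have hup : u ^ α = u ^ (α - 1) * u := by
    rw [← Real.rpow_add_one (ne_of_gt hu)]; norm_num
  have hup2 : u ^ α * u ^ (α - 1) = u ^ (2*α - 1) := by
    rw [← Real.rpow_add hu]; ring_nf
  have he : Real.exp (-u) * Real.exp (-u) = Real.exp (-(2*u)) := by
    rw [← Real.exp_add]; ring_nf
  unfold f
  rw [← hup2, ← he, hup]
  ring

lemma psi_tendsto (hα : 0 < α) :
    Tendsto (fun u => u ^ α * Real.exp (-u) * lowerIncompleteGamma α u) atTop (nhds 0) := by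
  apply squeeze_zero' (g := fun u => u ^ α * Real.exp (-u) * Real.Gamma α)
  · filter_upwards [eventually_gt_atTop (0:ℝ)] with u hu
    exact mul_nonneg (mul_nonneg (rpow_nonneg hu.le _) (exp_pos _).le) (G_nonneg α u)
  · filter_upwards [eventually_gt_atTop (0:ℝ)] with u hu
    exact mul_le_mul_of_nonneg_left (G_le hα u)
      (mul_nonneg (rpow_nonneg hu.le _) (exp_pos _).le)
  · have := (tendsto_rpow_mul_exp_neg_mul_atTop_nhds_zero α 1 one_pos).mul_const (Real.Gamma α)
    simpa using this

lemma psi_cwa (hα : 0 < α) :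
    ContinuousWithinAt (fun u => u ^ α * Real.exp (-u) * lowerIncompleteGamma α u) (Ici 0) 0 := by
  have h0 : (fun u : ℝ => u ^ α * Real.exp (-u) * lowerIncompleteGamma α u) 0 = 0 := by
    simp [Real.zero_rpow hα.ne']
  rw [ContinuousWithinAt]
  rw [show (0:ℝ) ^ α * Real.exp (-0) * lowerIncompleteGamma α 0 = 0 by
    simp [Real.zero_rpow hα.ne']]
  apply squeeze_zero' (g := fun u => u ^ α * Real.exp (-u) * Real.Gamma α)
  · filter_upwards [self_mem_nhdsWithin] with u hu
    exact mul_nonneg (mul_nonneg (rpow_nonneg hu _) (exp_pos _).le) (G_nonneg α u)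
  · filter_upwards [self_mem_nhdsWithin] with u hu
    exact mul_le_mul_of_nonneg_left (G_le hα u)
      (mul_nonneg (rpow_nonneg hu _) (exp_pos _).le)
  · have hc : ContinuousAt (fun u : ℝ => u ^ α * Real.exp (-u) * Real.Gamma α) 0 := by
      apply ContinuousAt.mul ?_ continuousAt_const
      exact (Real.continuousAt_rpow_const 0 α (Or.inr hα.le)).mul
        ((Real.continuous_exp.comp continuous_neg).continuousAt)
    have := hc.continuousWithinAt (s := Ici 0)
    rw [ContinuousWithinAt] at this
    simpa [Real.zero_rpow hα.ne'] using this

lemma N_eq (hα : 0 < α) :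
    ∫ u in Ioi (0:ℝ), (u - α) * f α u * lowerIncompleteGamma α u
      = ∫ u in Ioi (0:ℝ), u ^ (2*α - 1) * Real.exp (-(2*u)) := by
  have f'int : IntegrableOn
      (fun u => (α - u) * f α u * lowerIncompleteGamma α u + u ^ (2*α-1) * Real.exp (-(2*u)))
      (Ioi 0) := by
    refine Integrable.add ?_ (int_2exp hα)
    have h : IntegrableOn (fun u => -((u - α) * f α u * lowerIncompleteGamma α u)) (Ioi 0) :=
      (int_fG hα).neg
    exact h.congr_fun (fun u _ => by ring) measurableSet_Ioi
  have key := integral_Ioi_of_hasDerivAt_of_tendsto (psi_cwa hα)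
    (fun x hx => psi_deriv hα hx) f'int (psi_tendsto hα)
  simp only [Real.zero_rpow hα.ne', zero_mul, sub_zero] at key
  have hsplit : ∫ u in Ioi (0:ℝ),
      ((α - u) * f α u * lowerIncompleteGamma α u + u ^ (2*α-1) * Real.exp (-(2*u)))
      = (∫ u in Ioi (0:ℝ), (α - u) * f α u * lowerIncompleteGamma α u)
        + ∫ u in Ioi (0:ℝ), u ^ (2*α-1) * Real.exp (-(2*u)) := by
    refine integral_add ?_ (int_2exp hα)
    have h : IntegrableOn (fun u => -((u - α) * f α u * lowerIncompleteGamma α u)) (Ioi 0) :=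
      (int_fG hα).neg
    exact h.congr_fun (fun u _ => by ring) measurableSet_Ioi
  rw [hsplit] at key
  have hneg : ∫ u in Ioi (0:ℝ), (α - u) * f α u * lowerIncompleteGamma α u
      = - ∫ u in Ioi (0:ℝ), (u - α) * f α u * lowerIncompleteGamma α u := by
    rw [← integral_neg]
    exact setIntegral_congr_fun measurableSet_Ioi (fun u _ => by ring)
  rw [hneg] at key
  linarith


noncomputable def F (α t : ℝ) : ℝ≥0∞ := ENNReal.ofReal (f α t)

lemma F_meas : Measurable (F α) := ENNReal.measurable_ofReal.comp (f_meas α)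

lemma B_eq (hα : 0 < α) (s : ℝ) :
    ∫⁻ t in Ioc (0:ℝ) s, F α t = ENNReal.ofReal (lowerIncompleteGamma α s) := by
  rw [G_eq]
  unfold F
  rw [← ofReal_integral_eq_lintegral_ofReal ((f_int hα).mono_set Ioc_subset_Ioi_self)]
  filter_upwards [self_mem_ae_restrict measurableSet_Ioc] with t ht
  exact f_nonneg ht.1

lemma A_eq (hα : 0 < α) :
    ∫⁻ t in Ioi (0:ℝ), F α t = ENNReal.ofReal (Real.Gamma α) := by
  rw [Gamma_eq hα]
  unfold F
  rw [← ofReal_integral_eq_lintegral_ofReal (f_int hα)]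
  filter_upwards [self_mem_ae_restrict measurableSet_Ioi] with t ht
  exact f_nonneg ht

lemma G1_eq (α : ℝ) (u : ℝ) :
    lowerIncompleteGamma (α + 1) u = ∫ t in Ioc (0:ℝ) u, t ^ α * Real.exp (-t) := by
  unfold lowerIncompleteGamma; norm_num

/-- inner double-integral computation -/
lemma W_eq (hα : 0 < α) {u : ℝ} (hu : 0 < u) :
    ∫⁻ s in Ioo (0:ℝ) u, (∫⁻ t in Ioc (0:ℝ) s, F α t)
      = ENNReal.ofReal (u * lowerIncompleteGamma α u - lowerIncompleteGamma (α + 1) u) := by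
  set K : ℝ × ℝ → ℝ≥0∞ := fun p => if p.2 ∈ Ioc (0:ℝ) p.1 then F α p.2 else 0 with hK
  have hKmeas : Measurable K := by
    refine Measurable.ite ?_ (F_meas.comp measurable_snd) measurable_const
    exact MeasurableSet.inter (measurableSet_lt measurable_const measurable_snd)
      (measurableSet_le measurable_snd measurable_fst)
  have step1 : ∫⁻ s in Ioo (0:ℝ) u, (∫⁻ t in Ioc (0:ℝ) s, F α t)
      = ∫⁻ s in Ioo (0:ℝ) u, ∫⁻ t in Ioo (0:ℝ) u, K (s, t) := by
    refine setLIntegral_congr_fun measurableSet_Ioo (fun s hs => ?_)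
    have : (fun t => K (s, t)) = (Ioc (0:ℝ) s).indicator (F α) := by
      funext t; rw [Set.indicator_apply]
    have hset : Ioc (0:ℝ) s ∩ Ioo (0:ℝ) u = Ioc (0:ℝ) s :=
      inter_eq_left.mpr (fun t (ht : t ∈ Ioc (0:ℝ) s) => ⟨ht.1, lt_of_le_of_lt ht.2 hs.2⟩)
    rw [this, lintegral_indicator measurableSet_Ioc,
      Measure.restrict_restrict measurableSet_Ioc, hset]
  have step2 : ∫⁻ s in Ioo (0:ℝ) u, ∫⁻ t in Ioo (0:ℝ) u, K (s, t)
      = ∫⁻ t in Ioo (0:ℝ) u, ∫⁻ s in Ioo (0:ℝ) u, K (s, t) :=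
    lintegral_lintegral_swap hKmeas.aemeasurable
  have step3 : ∫⁻ t in Ioo (0:ℝ) u, ∫⁻ s in Ioo (0:ℝ) u, K (s, t)
      = ∫⁻ t in Ioo (0:ℝ) u, F α t * ENNReal.ofReal (u - t) := by
    refine setLIntegral_congr_fun measurableSet_Ioo (fun t ht => ?_)
    have h1 : (fun s => K (s, t)) = (Ici t).indicator (fun _ => F α t) := by
      funext s; rw [Set.indicator_apply, hK]
      simp only [mem_Ioc, mem_Ici]
      by_cases h : t ≤ s
      · simp [h, ht.1]
      · simp [h]
    rw [h1, lintegral_indicator measurableSet_Ici,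
      Measure.restrict_restrict measurableSet_Ici, setLIntegral_const]
    have h2 : Ici t ∩ Ioo (0:ℝ) u = Ico t u := by
      ext x
      simp only [mem_inter_iff, mem_Ici, mem_Ioo, mem_Ico]
      constructor
      · rintro ⟨h1', h2', h3'⟩; exact ⟨h1', h3'⟩
      · rintro ⟨h1', h3'⟩; exact ⟨h1', lt_of_lt_of_le ht.1 h1', h3'⟩
    rw [h2, Real.volume_Ico]
  have hint : IntegrableOn (fun t => f α t * (u - t)) (Ioo 0 u) := by
    refine Integrable.mono' (((f_int hα).mono_set
      (fun t (ht : t ∈ Ioo (0:ℝ) u) => ht.1)).mul_const u) ?_ ?_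
    · exact ((f_meas α).mul ((measurable_const.sub measurable_id))).aestronglyMeasurable
    · filter_upwards [self_mem_ae_restrict measurableSet_Ioo] with t ht
      rw [norm_mul, Real.norm_eq_abs, Real.norm_eq_abs, abs_of_nonneg (f_nonneg ht.1),
        abs_of_nonneg (by linarith [ht.2] : (0:ℝ) ≤ u - t)]
      have : u - t ≤ u := by linarith [ht.1]
      exact mul_le_mul_of_nonneg_left this (f_nonneg ht.1)
  have step4 : ∫⁻ t in Ioo (0:ℝ) u, F α t * ENNReal.ofReal (u - t)
      = ENNReal.ofReal (∫ t in Ioo (0:ℝ) u, f α t * (u - t)) := by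
    have e : ∫⁻ t in Ioo (0:ℝ) u, F α t * ENNReal.ofReal (u - t)
        = ∫⁻ t in Ioo (0:ℝ) u, ENNReal.ofReal (f α t * (u - t)) := by
      refine lintegral_congr_ae ?_
      filter_upwards [self_mem_ae_restrict measurableSet_Ioo] with t ht
      unfold F
      rw [← ENNReal.ofReal_mul (f_nonneg ht.1)]
    rw [e, ← ofReal_integral_eq_lintegral_ofReal hint]
    filter_upwards [self_mem_ae_restrict measurableSet_Ioo] with t ht
    exact mul_nonneg (f_nonneg ht.1) (by linarith [ht.2])
  have step5 : ∫ t in Ioo (0:ℝ) u, f α t * (u - t)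
      = u * lowerIncompleteGamma α u - lowerIncompleteGamma (α + 1) u := by
    have e1 : ∀ t ∈ Ioo (0:ℝ) u, f α t * (u - t) = u * f α t - t ^ α * Real.exp (-t) := by
      intro t ht
      have : t ^ α = t ^ (α - 1) * t := by
        rw [← Real.rpow_add_one (ne_of_gt ht.1)]; norm_num
      rw [this]; unfold f; ring
    rw [setIntegral_congr_fun measurableSet_Ioo e1, integral_sub
      (((f_int hα).mono_set (fun t (ht : t ∈ Ioo (0:ℝ) u) => ht.1)).const_mul u)
      ((f_int (by linarith : (0:ℝ) < α + 1)).mono_set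
        (fun t (ht : t ∈ Ioo (0:ℝ) u) => ht.1) |>.congr_fun
        (fun t _ => by unfold f; norm_num) measurableSet_Ioo),
      integral_const_mul, G_eq, G1_eq, ← integral_Ioc_eq_integral_Ioo, ← integral_Ioc_eq_integral_Ioo]
  rw [step1, step2, step3, step4, step5]


lemma B_mono : Monotone (fun s => ∫⁻ t in Ioc (0:ℝ) s, F α t) :=
  fun _ _ h => lintegral_mono_set (Ioc_subset_Ioc_right h)

lemma B_measf : Measurable (fun s => ∫⁻ t in Ioc (0:ℝ) s, F α t) := B_mono.measurable

lemma G1_le (hα : 0 < α) {u : ℝ} (hu : 0 < u) :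
    lowerIncompleteGamma (α + 1) u ≤ u * lowerIncompleteGamma α u := by
  rw [G1_eq, G_eq, ← integral_const_mul]
  refine setIntegral_mono_on
    ((f_int (by linarith : (0:ℝ) < α + 1)).mono_set Ioc_subset_Ioi_self |>.congr_fun
      (fun t _ => by unfold f; norm_num) measurableSet_Ioc)
    (((f_int hα).mono_set Ioc_subset_Ioi_self).const_mul u)
    measurableSet_Ioc (fun t ht => ?_)
  have h1 : t ^ α = t ^ (α - 1) * t := by
    rw [← Real.rpow_add_one (ne_of_gt ht.1)]; norm_num
  rw [h1]
  unfold f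
  calc t ^ (α-1) * t * Real.exp (-t) ≤ t ^ (α-1) * u * Real.exp (-t) :=
        mul_le_mul_of_nonneg_right
          (mul_le_mul_of_nonneg_left ht.2 (rpow_nonneg ht.1.le _)) (Real.exp_pos _).le
    _ = u * (t ^ (α-1) * Real.exp (-t)) := by ring

/-- the real integrand after all reductions -/
noncomputable def h (α u : ℝ) : ℝ :=
  f α u * (Real.Gamma α * u
    + (u * lowerIncompleteGamma α u - lowerIncompleteGamma (α + 1) u))

lemma h_eq (hα : 0 < α) {u : ℝ} (hu : 0 < u) :
    Real.Gamma α * (u ^ α * Real.exp (-u))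
      + ((u - α) * f α u * lowerIncompleteGamma α u + u ^ (2*α - 1) * Real.exp (-(2*u)))
    = h α u := by
  unfold h
  rw [lig_succ hα hu.le]
  have h1 : u ^ α = u ^ (α - 1) * u := by
    rw [← Real.rpow_add_one (ne_of_gt hu)]; norm_num
  have h2 : u ^ (2*α - 1) = u ^ (α - 1) * u ^ α := by
    rw [← Real.rpow_add hu]; ring_nf
  have h3 : Real.exp (-(2*u)) = Real.exp (-u) * Real.exp (-u) := by
    rw [← Real.exp_add]; ring_nf
  unfold f
  rw [h2, h3, h1]
  ring

lemma h_int (hα : 0 < α) : IntegrableOn (h α) (Ioi 0) := by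
  have base : IntegrableOn (fun u : ℝ => Real.Gamma α * (u ^ α * Real.exp (-u))
      + ((u - α) * f α u * lowerIncompleteGamma α u + u ^ (2*α - 1) * Real.exp (-(2*u))))
      (Ioi 0) :=
    ((int_upow hα).const_mul (Real.Gamma α)).add ((int_fG hα).add (int_2exp hα))
  exact base.congr_fun (fun u hu => h_eq hα hu) measurableSet_Ioi

lemma h_val (hα : 0 < α) :
    ∫ u in Ioi (0:ℝ), h α u
      = Real.Gamma α * Real.Gamma (α + 1) + 2 * ((1/2 : ℝ) ^ (2*α) * Real.Gamma (2*α)) := by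
  have e1 : ∫ u in Ioi (0:ℝ), h α u
      = ∫ u in Ioi (0:ℝ), (Real.Gamma α * (u ^ α * Real.exp (-u))
        + ((u - α) * f α u * lowerIncompleteGamma α u + u ^ (2*α - 1) * Real.exp (-(2*u)))) :=
    (setIntegral_congr_fun measurableSet_Ioi (fun u hu => (h_eq hα hu).symm))
  have i1 : IntegrableOn (fun u : ℝ => Real.Gamma α * (u ^ α * Real.exp (-u))) (Ioi 0) :=
    (int_upow hα).const_mul _
  have i2 : IntegrableOn (fun u : ℝ => (u - α) * f α u * lowerIncompleteGamma α u
      + u ^ (2*α - 1) * Real.exp (-(2*u))) (Ioi 0) := (int_fG hα).add (int_2exp hα)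
  rw [e1, integral_add i1 i2,
    integral_add (int_fG hα) (int_2exp hα), integral_const_mul, N_eq hα]
  have e2 : ∫ u in Ioi (0:ℝ), u ^ α * Real.exp (-u) = Real.Gamma (α + 1) := by
    rw [Gamma_eq (by linarith : (0:ℝ) < α + 1)]
    exact setIntegral_congr_fun measurableSet_Ioi (fun u _ => by unfold f; norm_num)
  have e3 : ∫ u in Ioi (0:ℝ), u ^ (2*α - 1) * Real.exp (-(2*u))
      = (1/2 : ℝ) ^ (2*α) * Real.Gamma (2*α) := by
    have := Real.integral_rpow_mul_exp_neg_mul_Ioi (a := 2*α) (r := 2)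
      (by linarith) (by norm_num)
    simpa using this
  rw [e2, e3]
  ring

lemma L_eq (hα : 0 < α) :
    ∫⁻ s in Ioi (0:ℝ), ENNReal.ofReal
        (Real.Gamma α ^ 2 - lowerIncompleteGamma α s ^ 2)
      = ENNReal.ofReal (∫ u in Ioi (0:ℝ), h α u) := by
  set A := ∫⁻ t in Ioi (0:ℝ), F α t with hA
  set B : ℝ → ℝ≥0∞ := fun s => ∫⁻ t in Ioc (0:ℝ) s, F α t with hB
  have hAtop : A ≠ ⊤ := by rw [hA, A_eq hα]; exact ENNReal.ofReal_ne_top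
  have hBle : ∀ s, B s ≤ A := fun s => lintegral_mono_set Ioc_subset_Ioi_self
  have hBtop : ∀ s, B s ≠ ⊤ := fun s => (lt_of_le_of_lt (hBle s) hAtop.lt_top).ne
  set K : ℝ × ℝ → ℝ≥0∞ :=
    fun p => if p.1 < p.2 then F α p.2 * (A + B p.1) else 0 with hK
  have hKmeas : Measurable K := by
    refine Measurable.ite (measurableSet_lt measurable_fst measurable_snd) ?_ measurable_const
    exact (F_meas.comp measurable_snd).mul
      (measurable_const.add (B_measf.comp measurable_fst))
  have step1 : ∀ s ∈ Ioi (0:ℝ), ENNReal.ofReal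
      (Real.Gamma α ^ 2 - lowerIncompleteGamma α s ^ 2) = ∫⁻ u in Ioi (0:ℝ), K (s, u) := by
    intro s hs
    have hs0 : (0:ℝ) < s := hs
    set C := ∫⁻ u in Ioi s, F α u with hC
    have hsplit : A = B s + C := by
      rw [hA, ← Ioc_union_Ioi_eq_Ioi hs0.le,
        lintegral_union measurableSet_Ioi (Ioc_disjoint_Ioi le_rfl)]
    have hone : ENNReal.ofReal (Real.Gamma α - lowerIncompleteGamma α s) = C := by
      rw [ENNReal.ofReal_sub _ (G_nonneg α s), ← A_eq hα, ← B_eq hα s, ← hA]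
      rw [show (∫⁻ t in Ioc (0:ℝ) s, F α t) = B s from rfl]
      rw [hsplit, ENNReal.add_sub_cancel_left (hBtop s)]
    have h1 : ENNReal.ofReal (Real.Gamma α ^ 2 - lowerIncompleteGamma α s ^ 2)
        = C * (A + B s) := by
      have e : Real.Gamma α ^ 2 - lowerIncompleteGamma α s ^ 2
          = (Real.Gamma α - lowerIncompleteGamma α s)
            * (Real.Gamma α + lowerIncompleteGamma α s) := by ring
      rw [e, ENNReal.ofReal_mul (sub_nonneg.2 (G_le hα s)), hone,
        ENNReal.ofReal_add (Real.Gamma_nonneg_of_nonneg hα.le) (G_nonneg α s),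
        ← A_eq hα, ← B_eq hα s, ← hA]
    have h2 : ∫⁻ u in Ioi s, F α u * (A + B s) = C * (A + B s) :=
      lintegral_mul_const _ F_meas
    have h3 : ∫⁻ u in Ioi (0:ℝ), K (s, u) = ∫⁻ u in Ioi s, F α u * (A + B s) := by
      have e : (fun u => K (s, u)) = (Ioi s).indicator (fun u => F α u * (A + B s)) := by
        funext u; rw [Set.indicator_apply]
        by_cases hc : s < u <;> simp [hc, hK, mem_Ioi]
      have hss : Ioi s ∩ Ioi (0:ℝ) = Ioi s :=
        inter_eq_left.mpr (fun u (hu : u ∈ Ioi s) =>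
          show u ∈ Ioi (0:ℝ) from lt_trans hs0 hu)
      rw [e, lintegral_indicator measurableSet_Ioi,
        Measure.restrict_restrict measurableSet_Ioi, hss]
    rw [h1, h3, h2]
  have step2 : ∫⁻ s in Ioi (0:ℝ), ∫⁻ u in Ioi (0:ℝ), K (s, u)
      = ∫⁻ u in Ioi (0:ℝ), ∫⁻ s in Ioi (0:ℝ), K (s, u) :=
    lintegral_lintegral_swap hKmeas.aemeasurable
  have step3 : ∀ u ∈ Ioi (0:ℝ), ∫⁻ s in Ioi (0:ℝ), K (s, u)
      = ENNReal.ofReal (h α u) := by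
    intro u hu
    have hu0 : (0:ℝ) < u := hu
    have e : (fun s => K (s, u)) = (Iio u).indicator (fun s => F α u * (A + B s)) := by
      funext s; rw [Set.indicator_apply]
      by_cases hc : s < u <;> simp [hc, hK, mem_Iio]
    rw [e, lintegral_indicator measurableSet_Iio,
      Measure.restrict_restrict measurableSet_Iio,
      show Iio u ∩ Ioi (0:ℝ) = Ioo 0 u by rw [inter_comm]; exact Ioi_inter_Iio,
      lintegral_const_mul (f := fun s => A + B s) _ (measurable_const.add B_measf),
      lintegral_add_left measurable_const, setLIntegral_const, Real.volume_Ioo, sub_zero]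
    rw [show (∫⁻ s in Ioo (0:ℝ) u, B s) = ENNReal.ofReal
        (u * lowerIncompleteGamma α u - lowerIncompleteGamma (α + 1) u) from W_eq hα hu0]
    rw [hA, A_eq hα, ← ENNReal.ofReal_mul (Real.Gamma_nonneg_of_nonneg hα.le),
      ← ENNReal.ofReal_add (mul_nonneg (Real.Gamma_nonneg_of_nonneg hα.le) hu0.le)
        (sub_nonneg.2 (G1_le hα hu0))]
    unfold F
    rw [← ENNReal.ofReal_mul (f_nonneg hu0)]
    rfl
  calc ∫⁻ s in Ioi (0:ℝ), ENNReal.ofReal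
        (Real.Gamma α ^ 2 - lowerIncompleteGamma α s ^ 2)
      = ∫⁻ s in Ioi (0:ℝ), ∫⁻ u in Ioi (0:ℝ), K (s, u) :=
        setLIntegral_congr_fun measurableSet_Ioi step1
    _ = ∫⁻ u in Ioi (0:ℝ), ∫⁻ s in Ioi (0:ℝ), K (s, u) := step2
    _ = ∫⁻ u in Ioi (0:ℝ), ENNReal.ofReal (h α u) :=
        setLIntegral_congr_fun measurableSet_Ioi step3
    _ = ENNReal.ofReal (∫ u in Ioi (0:ℝ), h α u) := by
        rw [← ofReal_integral_eq_lintegral_ofReal (h_int hα)]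
        filter_upwards [self_mem_ae_restrict measurableSet_Ioi] with u hu
        have hu0 : (0:ℝ) < u := hu
        exact mul_nonneg (f_nonneg hu0) (add_nonneg
          (mul_nonneg (Real.Gamma_nonneg_of_nonneg hα.le) hu0.le)
          (sub_nonneg.2 (G1_le hα hu0)))

theorem main (hα : 0 < α) :
    ∫ s in Ioi (0 : ℝ), (Real.Gamma α ^ 2 - lowerIncompleteGamma α s ^ 2) =
      α * Real.Gamma α ^ 2 + Real.Gamma (2 * α + 1) / ((2 : ℝ) ^ (2 * α) * α) := by
  have g1 := Real.Gamma_pos_of_pos hα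
  have g2 := Real.Gamma_pos_of_pos (by linarith : (0:ℝ) < α + 1)
  have g3 := Real.Gamma_pos_of_pos (by linarith : (0:ℝ) < 2 * α)
  have h12pos : (0:ℝ) < ((1:ℝ)/2) ^ (2*α) := rpow_pos_of_pos (by norm_num) _
  have hnn : 0 ≤ᵐ[volume.restrict (Ioi (0:ℝ))]
      fun s => Real.Gamma α ^ 2 - lowerIncompleteGamma α s ^ 2 :=
    ae_of_all _ (fun s => sub_nonneg.2 (pow_le_pow_left₀ (G_nonneg α s) (G_le hα s) 2))
  have hmeas : AEStronglyMeasurable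
      (fun s => Real.Gamma α ^ 2 - lowerIncompleteGamma α s ^ 2)
      (volume.restrict (Ioi (0:ℝ))) :=
    (measurable_const.sub ((G_meas hα).pow_const 2)).aestronglyMeasurable
  rw [integral_eq_lintegral_of_nonneg_ae hnn hmeas, L_eq hα, h_val hα,
    ENNReal.toReal_ofReal (by positivity)]
  rw [Real.Gamma_add_one hα.ne', Real.Gamma_add_one (by linarith : 2*α ≠ 0),
    show ((1:ℝ)/2) ^ (2*α) = 1 / (2:ℝ)^(2*α) by
      rw [Real.div_rpow zero_le_one (by norm_num), Real.one_rpow]]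
  have hp : (0:ℝ) < (2:ℝ) ^ (2*α) := rpow_pos_of_pos two_pos _
  field_simp



end Work

/-- For `α > 0`,
`∫₀^∞ (Γ(α)² − γ(α,s)²) ds = α Γ(α)² + Γ(2α+1)/(2^(2α) α)`. -/
theorem integral_Gamma_sq_sub_lowerIncompleteGamma_sq (α : ℝ) (hα : 0 < α) :
    ∫ s in Ioi (0 : ℝ), (Real.Gamma α ^ 2 - lowerIncompleteGamma α s ^ 2) =
      α * Real.Gamma α ^ 2 + Real.Gamma (2 * α + 1) / ((2 : ℝ) ^ (2 * α) * α) :=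
  Work.main hα
end

section
/- Let X₁ and X₂ be i.i.d. random variables with the Gamma(α, λ) distribution (α, λ > 0). Then the classical Gini index G = E[|X₁ − X₂|]/(2·E[X₁]) equals Γ(α + 1/2)/(√π · α · Γ(α)), where Γ is the gamma function. -/
open MeasureTheory ProbabilityTheory Set
open Real intervalIntegral
open scoped ENNReal NNReal

lemma gini_withDensity (a r : ℝ) (ha : 0 < a) (hr : 0 < r) (g : ℝ → ℝ) :
    ∫ x, g x ∂(gammaMeasure a r) = ∫ x, gammaPDFReal a r x * g x := by
  have h1 : gammaMeasure a r
      = volume.withDensity (fun x => ((gammaPDFReal a r x).toNNReal : ℝ≥0∞)) := rfl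
  rw [h1, integral_withDensity_eq_integral_smul
    ((measurable_gammaPDFReal a r).real_toNNReal) g]
  congr 1
  ext x
  rw [NNReal.smul_def, Real.coe_toNNReal _ (gammaPDFReal_nonneg ha hr x), smul_eq_mul]

lemma gini_restrict (a r : ℝ) (g : ℝ → ℝ) :
    ∫ x, gammaPDFReal a r x * g x = ∫ x in Ioi 0, gammaPDFReal a r x * g x := by
  rw [← integral_Ici_eq_integral_Ioi]
  symm
  apply setIntegral_eq_integral_of_ae_compl_eq_zero
  filter_upwards with x hx
  rw [mem_Ici, not_le] at hx
  simp [gammaPDFReal, not_le.mpr hx]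

lemma gini_aux_integrableOn {s b : ℝ} (hs : -1 < s) (hb : 0 < b) :
    IntegrableOn (fun x : ℝ => x ^ s * Real.exp (-(b * x))) (Ioi 0) := by
  have h := integrableOn_rpow_mul_exp_neg_mul_rpow hs zero_lt_one hb
  refine h.congr_fun (fun x hx => ?_) measurableSet_Ioi
  show x ^ s * Real.exp (-b * x ^ (1:ℝ)) = _
  rw [Real.rpow_one, neg_mul]

lemma gini_integrableOn_pdf_mul {a r : ℝ} (ha : 0 < a) (hr : 0 < r) {g : ℝ → ℝ}
    (hg : IntegrableOn (fun x => gammaPDFReal a r x * g x) (Ioi 0)) :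
    Integrable (fun x => gammaPDFReal a r x * g x) := by
  rw [← integrableOn_univ, ← Set.Iic_union_Ioi (a := (0:ℝ)), integrableOn_union]
  refine ⟨?_, hg⟩
  rw [IntegrableOn, Measure.restrict_congr_set Iio_ae_eq_Iic.symm]
  refine (integrable_zero _ _ _).congr ?_
  rw [Filter.EventuallyEq, ae_restrict_iff' measurableSet_Iio]
  filter_upwards with x hx
  rw [mem_Iio] at hx
  simp [gammaPDFReal, not_le.mpr hx]

lemma gini_integrable_iff {a r : ℝ} (ha : 0 < a) (hr : 0 < r) (g : ℝ → ℝ) :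
    Integrable g (gammaMeasure a r) ↔
      Integrable (fun x => gammaPDFReal a r x * g x) := by
  have h1 : gammaMeasure a r
      = volume.withDensity (fun x => ((gammaPDFReal a r x).toNNReal : ℝ≥0∞)) := rfl
  rw [h1, integrable_withDensity_iff_integrable_smul
    ((measurable_gammaPDFReal a r).real_toNNReal)]
  have key : ∀ x, (gammaPDFReal a r x).toNNReal • g x = gammaPDFReal a r x * g x := by
    intro x
    rw [NNReal.smul_def, Real.coe_toNNReal _ (gammaPDFReal_nonneg ha hr x), smul_eq_mul]
  constructor <;> intro h <;> refine h.congr (Filter.Eventually.of_forall fun x => ?_)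
  · exact key x
  · exact (key x).symm

lemma gini_pdf_mul_id_integrableOn {a r : ℝ} (ha : 0 < a) (hr : 0 < r) :
    IntegrableOn (fun x => gammaPDFReal a r x * x) (Ioi 0) := by
  have h := (gini_aux_integrableOn (s := a) (by linarith) hr).const_mul (r ^ a / Gamma a)
  refine IntegrableOn.congr_fun h (fun x hx => ?_) measurableSet_Ioi
  rw [mem_Ioi] at hx
  simp only [gammaPDFReal, if_pos hx.le]
  rw [show a = a - 1 + 1 by ring, Real.rpow_add hx, Real.rpow_one]
  ring

lemma gini_integrable_id {a r : ℝ} (ha : 0 < a) (hr : 0 < r) :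
    Integrable (fun x => x) (gammaMeasure a r) :=
  (gini_integrable_iff ha hr _).mpr
    (gini_integrableOn_pdf_mul ha hr (gini_pdf_mul_id_integrableOn ha hr))

-- integrability of the t-integrand (for fixed x ≥ 0, rate s ≥ 0)
lemma gini_t_intable {a s : ℝ} (ha : 0 < a) :
    IntervalIntegrable (fun t => t ^ (a-1) * ((1-t) * Real.exp (-(s * t)))) volume 0 1 := by
  refine (intervalIntegrable_rpow' (by linarith)).mul_continuousOn ?_
  fun_prop

lemma gini_subst {a r x : ℝ} (ha : 0 < a) (hx : 0 < x) :
    ∫ y in (0:ℝ)..x, y ^ (a-1) * Real.exp (-(r * y)) * (x - y)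
      = x ^ (a-1) * x ^ 2 * ∫ t in (0:ℝ)..1, t ^ (a-1) * ((1-t) * Real.exp (-(r * x * t))) := by
  have h := smul_integral_comp_mul_left
    (f := fun y => y ^ (a-1) * Real.exp (-(r * y)) * (x - y)) (a := 0) (b := 1) x
  rw [mul_zero, mul_one] at h
  rw [← h, smul_eq_mul]
  rw [show (∫ t in (0:ℝ)..1, (x*t) ^ (a-1) * Real.exp (-(r * (x*t))) * (x - x*t))
      = ∫ t in (0:ℝ)..1, x ^ (a-1) * x * (t ^ (a-1) * ((1-t) * Real.exp (-(r * x * t)))) from ?_]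
  · rw [intervalIntegral.integral_const_mul]
    ring
  · refine integral_congr (fun t ht => ?_)
    rw [uIcc_of_le zero_le_one] at ht
    rw [Real.mul_rpow hx.le ht.1, mul_comm r x, mul_assoc]
    ring

lemma gini_J {a : ℝ} (ha : 0 < a) :
    ∫ t in (0:ℝ)..1, t ^ (a-1) * ((1-t) * (1+t) ^ (-(2*a+1)))
      = (2:ℝ) ^ (-(2*a)) / a := by
  have key : ∫ t in (0:ℝ)..1, t ^ (a-1) * ((1-t) * (1+t) ^ (-(2*a+1)))
      = (fun t : ℝ => t ^ a * (1+t) ^ (-(2*a)) / a) 1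
        - (fun t : ℝ => t ^ a * (1+t) ^ (-(2*a)) / a) 0 := by
    refine integral_eq_sub_of_hasDerivAt_of_le
      (f := fun t : ℝ => t ^ a * (1+t) ^ (-(2*a)) / a)
      (f' := fun t : ℝ => t ^ (a-1) * ((1-t) * (1+t) ^ (-(2*a+1))))
      zero_le_one ?_ ?_ ?_
    · apply ContinuousOn.div_const
      apply ContinuousOn.mul
      · exact continuousOn_id.rpow_const (fun t _ => Or.inr ha.le)
      · exact (continuousOn_const.add continuousOn_id).rpow_const
          (fun t ht => Or.inl (by rcases ht with ⟨h0, _⟩; norm_num; linarith))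
    · intro t ht
      rcases ht with ⟨ht0, ht1⟩
      have h1t : (0:ℝ) < 1 + t := by linarith
      have d1 : HasDerivAt (fun t : ℝ => t ^ a) (a * t ^ (a-1)) t :=
        Real.hasDerivAt_rpow_const (Or.inl ht0.ne')
      have d2 : HasDerivAt (fun t : ℝ => (1+t) ^ (-(2*a)))
          (1 * (-(2*a)) * (1+t) ^ (-(2*a)-1)) t := by
        have := HasDerivAt.rpow_const (p := -(2*a)) ((hasDerivAt_id t).const_add 1)
          (Or.inl h1t.ne')
        simpa using this
      have := (d1.mul d2).div_const a
      refine HasDerivAt.congr_deriv this ?_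
      have e1 : t ^ a = t ^ (a-1) * t := by
        rw [← Real.rpow_add_one ht0.ne']; ring_nf
      have e2 : (1+t) ^ (-(2*a)) = (1+t) ^ (-(2*a+1)) * (1+t) := by
        rw [← Real.rpow_add_one h1t.ne']; ring_nf
      have e3 : (1+t) ^ (-(2*a)-1) = (1+t) ^ (-(2*a+1)) := by ring_nf
      rw [e3, e1, e2]
      field_simp
      ring
    · refine (intervalIntegrable_rpow' (by linarith)).mul_continuousOn ?_
      apply ContinuousOn.mul
      · fun_prop
      · refine (continuousOn_const.add continuousOn_id).rpow_const (fun t ht => Or.inl ?_)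
        rw [uIcc_of_le zero_le_one] at ht
        rcases ht with ⟨h0, _⟩
        intro h
        simp at h
        linarith
  rw [key]
  simp only []
  rw [Real.zero_rpow ha.ne', Real.one_rpow]
  norm_num

lemma gini_x_integral {a b : ℝ} (ha : 0 < a) (hb : 0 < b) :
    ∫ x in Ioi (0:ℝ), x ^ (2*a) * Real.exp (-(b*x)) = (1/b) ^ (2*a+1) * Gamma (2*a+1) := by
  have h := integral_rpow_mul_exp_neg_mul_Ioi (a := 2*a+1) (by linarith) hb
  rw [show 2*a+1-1 = 2*a by ring] at h
  exact h

lemma gini_moment_one {a r : ℝ} (ha : 0 < a) (hr : 0 < r) :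
    ∫ x in Ioi (0:ℝ), gammaPDFReal a r x * x = a / r := by
  rw [setIntegral_congr_fun measurableSet_Ioi
    (g := fun x => (r ^ a / Gamma a) * (x ^ (a+1-1) * Real.exp (-(r*x))))
    (fun x hx => by
      rw [mem_Ioi] at hx
      simp only [gammaPDFReal, if_pos hx.le]
      rw [show a+1-1 = a-1+1 by ring, Real.rpow_add hx, Real.rpow_one]
      ring)]
  rw [MeasureTheory.integral_const_mul, integral_rpow_mul_exp_neg_mul_Ioi (by linarith) hr,
    Real.Gamma_add_one ha.ne', one_div, Real.inv_rpow hr.le, Real.rpow_add hr, Real.rpow_one]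
  have h1 : Gamma a ≠ 0 := (Real.Gamma_pos_of_pos ha).ne'
  have h2 : r ^ a ≠ 0 := (Real.rpow_pos_of_pos hr a).ne'
  field_simp

lemma gini_lintegral_Ioi (h : ℝ → ℝ≥0∞) (h0 : ∀ x < (0:ℝ), h x = 0) :
    ∫⁻ x, h x = ∫⁻ x in Ioi (0:ℝ), h x := by
  rw [← lintegral_add_compl h (measurableSet_Ioi (a := (0:ℝ)))]
  have : ∫⁻ x in (Ioi (0:ℝ))ᶜ, h x = 0 := by
    rw [compl_Ioi, ← Measure.restrict_congr_set Iio_ae_eq_Iic]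
    rw [setLIntegral_congr_fun_ae measurableSet_Iio
      (ae_of_all _ (fun x (hx : x < 0) => h0 x hx))]
    simp
  rw [this, add_zero]

lemma gini_ofReal_abs (x y : ℝ) :
    ENNReal.ofReal |x - y| = ENNReal.ofReal (x - y) + ENNReal.ofReal (y - x) := by
  rcases le_total x y with h | h
  · have h1 : ENNReal.ofReal (x - y) = 0 := ENNReal.ofReal_of_nonpos (by linarith)
    have h2 : |x - y| = y - x := by rw [abs_of_nonpos (by linarith)]; ring
    rw [h1, h2, zero_add]
  · have h1 : ENNReal.ofReal (y - x) = 0 := ENNReal.ofReal_of_nonpos (by linarith)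
    have h2 : |x - y| = x - y := abs_of_nonneg (by linarith)
    rw [h1, h2, add_zero]

lemma gini_inner {a r x : ℝ} (ha : 0 < a) (hr : 0 < r) (hx : 0 < x) :
    ∫⁻ y in Ioi (0:ℝ), gammaPDF a r y * ENNReal.ofReal (x - y)
      = ENNReal.ofReal ((r ^ a / Gamma a) * (x ^ (a-1) * x ^ 2
          * ∫ t in (0:ℝ)..1, t ^ (a-1) * ((1-t) * Real.exp (-(r * x * t))))) := by
  have hsplit : (Ioi (0:ℝ)) = Ioc 0 x ∪ Ioi x := (Ioc_union_Ioi_eq_Ioi hx.le).symm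
  rw [hsplit, lintegral_union measurableSet_Ioi Ioc_disjoint_Ioi_same]
  have hzero : ∫⁻ y in Ioi x, gammaPDF a r y * ENNReal.ofReal (x - y) = 0 := by
    rw [setLIntegral_congr_fun_ae measurableSet_Ioi
      (ae_of_all _ (fun y (hy : x < y) => ?_)), lintegral_zero]
    rw [ENNReal.ofReal_of_nonpos (by linarith), mul_zero]
  rw [hzero, add_zero]
  have hintable : IntegrableOn (fun y => gammaPDFReal a r y * (x - y)) (Ioc 0 x) := by
    have h1 : IntervalIntegrable (fun y => (r ^ a / Gamma a)
        * (y ^ (a-1) * (Real.exp (-(r * y)) * (x - y)))) volume 0 x := by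
      refine IntervalIntegrable.const_mul ?_ _
      refine (intervalIntegrable_rpow' (by linarith)).mul_continuousOn ?_
      fun_prop
    have h2 := (intervalIntegrable_iff_integrableOn_Ioc_of_le hx.le).mp h1
    refine h2.congr_fun (fun y hy => ?_) measurableSet_Ioc
    simp only [gammaPDFReal, if_pos hy.1.le]
    ring
  have hconv : ∫⁻ y in Ioc 0 x, gammaPDF a r y * ENNReal.ofReal (x - y)
      = ENNReal.ofReal (∫ y in Ioc 0 x, gammaPDFReal a r y * (x - y)) := by
    rw [ofReal_integral_eq_lintegral_ofReal hintable
      ((ae_restrict_iff' measurableSet_Ioc).mpr (ae_of_all _ (fun y hy =>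
        mul_nonneg (gammaPDFReal_nonneg ha hr y) (by rcases hy with ⟨_, h2⟩; linarith))))]
    refine lintegral_congr_ae ((ae_restrict_iff' measurableSet_Ioc).mpr
      (ae_of_all _ (fun y hy => ?_)))
    show gammaPDF a r y * ENNReal.ofReal (x - y) = ENNReal.ofReal (gammaPDFReal a r y * (x - y))
    rw [ENNReal.ofReal_mul (gammaPDFReal_nonneg ha hr y)]
    rfl
  rw [hconv]
  congr 1
  rw [← intervalIntegral.integral_of_le hx.le]
  rw [show (∫ y in (0:ℝ)..x, gammaPDFReal a r y * (x - y))
      = ∫ y in (0:ℝ)..x, (r ^ a / Gamma a) * (y ^ (a-1) * Real.exp (-(r * y)) * (x - y)) from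
    intervalIntegral.integral_congr (fun y hy => ?_)]
  · rw [intervalIntegral.integral_const_mul, gini_subst ha hx]
  · rw [uIcc_of_le hx.le] at hy
    simp only [gammaPDFReal, if_pos hy.1]
    ring

lemma gini_N1 {a r : ℝ} (ha : 0 < a) (hr : 0 < r) :
    ∫⁻ x in Ioi (0:ℝ),
        gammaPDF a r x * ∫⁻ y in Ioi (0:ℝ), gammaPDF a r y * ENNReal.ofReal (x - y)
      = ENNReal.ofReal ((r ^ a / Gamma a) ^ 2 * (1/r) ^ (2*a+1) * Gamma (2*a+1)
          * ((2:ℝ) ^ (-(2*a)) / a)) := by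
  set c : ℝ := r ^ a / Gamma a with hc
  have hc0 : 0 ≤ c := by positivity
  set Φ : ℝ → ℝ → ℝ := fun x t =>
    c ^ 2 * (x ^ (2*a) * (t ^ (a-1) * ((1-t) * Real.exp (-(r * (1+t) * x))))) with hΦ
  -- Step A: pointwise identity for x > 0
  have claimA : ∀ x : ℝ, x ∈ Ioi (0:ℝ) →
      gammaPDF a r x * ∫⁻ y in Ioi (0:ℝ), gammaPDF a r y * ENNReal.ofReal (x - y)
        = ∫⁻ t in Ioc (0:ℝ) 1, ENNReal.ofReal (Φ x t) := by
    intro x hx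
    rw [mem_Ioi] at hx
    rw [gini_inner ha hr hx]
    have hpdf : gammaPDF a r x = ENNReal.ofReal (c * x ^ (a-1) * Real.exp (-(r * x))) := by
      rw [gammaPDF_of_nonneg hx.le]
    rw [hpdf, ← ENNReal.ofReal_mul (by positivity)]
    have hTi : IntegrableOn
        (fun t => t ^ (a-1) * ((1-t) * Real.exp (-(r * x * t)))) (Ioc (0:ℝ) 1) :=
      (intervalIntegrable_iff_integrableOn_Ioc_of_le zero_le_one).mp (gini_t_intable ha)
    have hx2a : x ^ (a-1) * x ^ (a-1) * x ^ 2 = x ^ (2*a) := by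
      rw [show (x:ℝ) ^ 2 = x ^ ((2:ℕ):ℝ) by rw [Real.rpow_natCast],
        ← Real.rpow_add hx, ← Real.rpow_add hx]
      norm_num
      ring_nf
    have key : (c * x ^ (a-1) * Real.exp (-(r * x))) * (c * (x ^ (a-1) * x ^ 2
          * ∫ t in (0:ℝ)..1, t ^ (a-1) * ((1-t) * Real.exp (-(r * x * t)))))
        = ∫ t in Ioc (0:ℝ) 1, Φ x t := by
      have h2 : ∫ t in Ioc (0:ℝ) 1, Φ x t
          = (c ^ 2 * (x ^ (2*a) * Real.exp (-(r * x))))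
            * ∫ t in Ioc (0:ℝ) 1, t ^ (a-1) * ((1-t) * Real.exp (-(r * x * t))) := by
        rw [← MeasureTheory.integral_const_mul]
        refine setIntegral_congr_fun measurableSet_Ioc (fun t ht => ?_)
        have hexp : Real.exp (-(r * x)) * Real.exp (-(r * x * t))
            = Real.exp (-(r * (1+t) * x)) := by
          rw [← Real.exp_add]; ring_nf
        rw [hΦ]
        simp only []
        rw [← hexp]
        ring
      rw [h2, intervalIntegral.integral_of_le zero_le_one, ← hx2a]
      ring
    rw [key]
    exact ofReal_integral_eq_lintegral_ofReal
      (MeasureTheory.IntegrableOn.congr_fun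
        (hTi.const_mul (c ^ 2 * (x ^ (2*a) * Real.exp (-(r*x)))))
        (fun t ht => by
          rw [hΦ]
          simp only []
          rw [show Real.exp (-(r*(1+t)*x)) = Real.exp (-(r*x)) * Real.exp (-(r*x*t)) by
            rw [← Real.exp_add]; ring_nf]
          ring) measurableSet_Ioc)
      ((ae_restrict_iff' measurableSet_Ioc).mpr (ae_of_all _ (fun t ht => by
        rcases ht with ⟨ht0, ht1⟩
        show (0:ℝ) ≤ Φ x t
        have h1 : (0:ℝ) ≤ t ^ (a-1) := Real.rpow_nonneg ht0.le _
        have h2 : (0:ℝ) ≤ x ^ (2*a) := Real.rpow_nonneg hx.le _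
        have h3 : (0:ℝ) ≤ 1 - t := by linarith
        rw [hΦ]
        simp only []
        exact mul_nonneg (by positivity) (mul_nonneg h2 (mul_nonneg h1
          (mul_nonneg h3 (Real.exp_pos _).le))))))
  rw [setLIntegral_congr_fun_ae measurableSet_Ioi (ae_of_all _ claimA)]
  -- Step B: swap
  have hmeasΦ : Measurable (fun p : ℝ × ℝ => ENNReal.ofReal (Φ p.1 p.2)) := by
    apply Measurable.ennreal_ofReal
    rw [hΦ]
    fun_prop
  rw [lintegral_lintegral_swap (hmeasΦ.aemeasurable)]
  -- Step C: inner x integral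
  set K : ℝ := c ^ 2 * (1/r) ^ (2*a+1) * Gamma (2*a+1) with hK
  have claimC : ∀ t : ℝ, t ∈ Ioc (0:ℝ) 1 →
      ∫⁻ x in Ioi (0:ℝ), ENNReal.ofReal (Φ x t)
        = ENNReal.ofReal (K * (t ^ (a-1) * ((1-t) * (1+t) ^ (-(2*a+1))))) := by
    intro t ht
    rcases ht with ⟨ht0, ht1⟩
    have h1t : (0:ℝ) < 1 + t := by linarith
    have hb : 0 < r * (1+t) := by positivity
    have hxi : IntegrableOn (fun x : ℝ =>
        (c ^ 2 * (t ^ (a-1) * (1-t))) * (x ^ (2*a) * Real.exp (-(r * (1+t) * x))))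
        (Ioi 0) := (gini_aux_integrableOn (by linarith) hb).const_mul _
    have heq : ∀ x : ℝ, Φ x t
        = (c ^ 2 * (t ^ (a-1) * (1-t))) * (x ^ (2*a) * Real.exp (-(r * (1+t) * x))) := by
      intro x; rw [hΦ]; simp only []; ring
    have hnn : (0:ℝ) ≤ t ^ (a-1) := Real.rpow_nonneg ht0.le _
    rw [← ofReal_integral_eq_lintegral_ofReal
      (hxi.congr_fun (fun x _ => (heq x).symm) measurableSet_Ioi)
      ((ae_restrict_iff' measurableSet_Ioi).mpr (ae_of_all _ (fun x hx => by
        rw [mem_Ioi] at hx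
        show (0:ℝ) ≤ Φ x t
        have h2 : (0:ℝ) ≤ x ^ (2*a) := Real.rpow_nonneg hx.le _
        have h3 : (0:ℝ) ≤ 1 - t := by linarith
        rw [heq x]
        exact mul_nonneg (mul_nonneg (by positivity) (mul_nonneg hnn h3))
          (mul_nonneg h2 (Real.exp_pos _).le))))]
    congr 1
    rw [setIntegral_congr_fun measurableSet_Ioi (fun x _ => heq x),
      MeasureTheory.integral_const_mul, gini_x_integral ha hb]
    have hr1 : (1/(r*(1+t))) ^ (2*a+1) = (1/r) ^ (2*a+1) * (1+t) ^ (-(2*a+1)) := by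
      rw [Real.rpow_neg h1t.le, ← Real.inv_rpow h1t.le,
        ← Real.mul_rpow (by positivity) (by positivity)]
      congr 1
      field_simp
    rw [hr1, hK]
    ring
  rw [setLIntegral_congr_fun_ae measurableSet_Ioc (ae_of_all _ claimC)]
  -- Step D: final t integral
  have hKnn : 0 ≤ K := by rw [hK]; positivity
  have hti : IntegrableOn
      (fun t => K * (t ^ (a-1) * ((1-t) * (1+t) ^ (-(2*a+1))))) (Ioc (0:ℝ) 1) := by
    refine (intervalIntegrable_iff_integrableOn_Ioc_of_le zero_le_one).mp ?_
    refine IntervalIntegrable.const_mul ?_ _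
    exact (intervalIntegrable_rpow' (r := a-1) (by linarith)).mul_continuousOn (by
        apply ContinuousOn.mul
        · fun_prop
        · refine (continuousOn_const.add continuousOn_id).rpow_const (fun s hs => Or.inl ?_)
          rw [uIcc_of_le zero_le_one] at hs
          rcases hs with ⟨h0, _⟩
          intro h; simp at h; linarith)
  rw [← ofReal_integral_eq_lintegral_ofReal hti
    ((ae_restrict_iff' measurableSet_Ioc).mpr (ae_of_all _ (fun t ht => by
      rcases ht with ⟨ht0, ht1⟩
      have h1 : (0:ℝ) ≤ t ^ (a-1) := Real.rpow_nonneg ht0.le _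
      have h2 : (0:ℝ) ≤ (1+t) ^ (-(2*a+1)) := Real.rpow_nonneg (by linarith) _
      exact mul_nonneg hKnn (mul_nonneg h1 (mul_nonneg (by linarith) h2)))))]
  rw [← intervalIntegral.integral_of_le zero_le_one, intervalIntegral.integral_const_mul,
    gini_J ha]

lemma gini_pdf_meas (a r : ℝ) : Measurable (gammaPDF a r) :=
  (measurable_gammaPDFReal a r).ennreal_ofReal

lemma gini_N {a r : ℝ} (ha : 0 < a) (hr : 0 < r) :
    ∫⁻ p : ℝ × ℝ, ENNReal.ofReal |p.1 - p.2|
        ∂((gammaMeasure a r).prod (gammaMeasure a r))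
      = ENNReal.ofReal (2 * ((r ^ a / Gamma a) ^ 2 * (1/r) ^ (2*a+1) * Gamma (2*a+1)
          * ((2:ℝ) ^ (-(2*a)) / a))) := by
  have hprob : IsProbabilityMeasure (gammaMeasure a r) := isProbabilityMeasure_gammaMeasure ha hr
  have hmF : Measurable (fun p : ℝ × ℝ => ENNReal.ofReal |p.1 - p.2|) :=
    (measurable_fst.sub measurable_snd).abs.ennreal_ofReal
  rw [lintegral_prod _ hmF.aemeasurable]
  -- unfold inner density
  have hinner : ∀ x : ℝ, (∫⁻ y, ENNReal.ofReal |x - y| ∂(gammaMeasure a r))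
      = (∫⁻ y in Ioi 0, gammaPDF a r y * ENNReal.ofReal (x - y))
        + ∫⁻ y in Ioi 0, gammaPDF a r y * ENNReal.ofReal (y - x) := by
    intro x
    rw [gammaMeasure, lintegral_withDensity_eq_lintegral_mul volume (gini_pdf_meas a r)
      (show Measurable (fun y : ℝ => ENNReal.ofReal |x - y|) by fun_prop)]
    rw [gini_lintegral_Ioi _ (fun y hy => by
      show gammaPDF a r y * ENNReal.ofReal |x - y| = 0
      rw [gammaPDF_of_neg hy, zero_mul])]
    rw [← lintegral_add_left (show Measurable
      (fun y : ℝ => gammaPDF a r y * ENNReal.ofReal (x - y)) from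
      (gini_pdf_meas a r).mul (by fun_prop))]
    refine setLIntegral_congr_fun_ae measurableSet_Ioi (ae_of_all _ (fun y hy => ?_))
    show gammaPDF a r y * ENNReal.ofReal |x - y| = _
    rw [gini_ofReal_abs, mul_add]
  simp only [hinner]
  -- unfold outer density
  have hgmeas : Measurable (fun x : ℝ =>
      (∫⁻ y in Ioi 0, gammaPDF a r y * ENNReal.ofReal (x - y))
        + ∫⁻ y in Ioi 0, gammaPDF a r y * ENNReal.ofReal (y - x)) := by
    apply Measurable.add
    · exact Measurable.lintegral_prod_right ((gini_pdf_meas a r).comp measurable_snd |>.mul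
        ((measurable_fst.sub measurable_snd).ennreal_ofReal))
    · exact Measurable.lintegral_prod_right ((gini_pdf_meas a r).comp measurable_snd |>.mul
        ((measurable_snd.sub measurable_fst).ennreal_ofReal))
  rw [gammaMeasure, lintegral_withDensity_eq_lintegral_mul volume (gini_pdf_meas a r) hgmeas]
  rw [gini_lintegral_Ioi _ (fun x hx => by
    show gammaPDF a r x * _ = 0
    rw [gammaPDF_of_neg hx, zero_mul])]
  have hsplit : (∫⁻ x in Ioi (0:ℝ), (gammaPDF a r *
      fun x => (∫⁻ y in Ioi 0, gammaPDF a r y * ENNReal.ofReal (x - y))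
        + ∫⁻ y in Ioi 0, gammaPDF a r y * ENNReal.ofReal (y - x)) x)
      = (∫⁻ x in Ioi (0:ℝ),
          gammaPDF a r x * ∫⁻ y in Ioi 0, gammaPDF a r y * ENNReal.ofReal (x - y))
        + ∫⁻ x in Ioi (0:ℝ),
          gammaPDF a r x * ∫⁻ y in Ioi 0, gammaPDF a r y * ENNReal.ofReal (y - x) := by
    rw [← lintegral_add_left]
    · refine setLIntegral_congr_fun_ae measurableSet_Ioi (ae_of_all _ (fun x hx => ?_))
      show gammaPDF a r x * _ = _
      rw [mul_add]
    · exact (gini_pdf_meas a r).mul (Measurable.lintegral_prod_right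
        (((gini_pdf_meas a r).comp measurable_snd).mul
          ((measurable_fst.sub measurable_snd).ennreal_ofReal)))

  rw [hsplit]
  -- second term equals first by symmetry
  have hswap : (∫⁻ x in Ioi (0:ℝ),
        gammaPDF a r x * ∫⁻ y in Ioi 0, gammaPDF a r y * ENNReal.ofReal (y - x))
      = ∫⁻ x in Ioi (0:ℝ),
        gammaPDF a r x * ∫⁻ y in Ioi 0, gammaPDF a r y * ENNReal.ofReal (x - y) := by
    have hm : Measurable (fun p : ℝ × ℝ =>
        gammaPDF a r p.1 * (gammaPDF a r p.2 * ENNReal.ofReal (p.2 - p.1))) :=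
      ((gini_pdf_meas a r).comp measurable_fst).mul
        (((gini_pdf_meas a r).comp measurable_snd).mul
          ((measurable_snd.sub measurable_fst).ennreal_ofReal))
    calc ∫⁻ x in Ioi (0:ℝ),
          gammaPDF a r x * ∫⁻ y in Ioi 0, gammaPDF a r y * ENNReal.ofReal (y - x)
        = ∫⁻ x in Ioi (0:ℝ), ∫⁻ y in Ioi 0,
            gammaPDF a r x * (gammaPDF a r y * ENNReal.ofReal (y - x)) := by
          refine setLIntegral_congr_fun_ae measurableSet_Ioi (ae_of_all _ (fun x hx => ?_))
          rw [lintegral_const_mul _ (show Measurable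
            (fun y : ℝ => gammaPDF a r y * ENNReal.ofReal (y - x)) from
            (gini_pdf_meas a r).mul (by fun_prop))]
      _ = ∫⁻ y in Ioi (0:ℝ), ∫⁻ x in Ioi 0,
            gammaPDF a r x * (gammaPDF a r y * ENNReal.ofReal (y - x)) :=
          lintegral_lintegral_swap hm.aemeasurable
      _ = ∫⁻ y in Ioi (0:ℝ),
            gammaPDF a r y * ∫⁻ x in Ioi 0, gammaPDF a r x * ENNReal.ofReal (y - x) := by
          refine setLIntegral_congr_fun_ae measurableSet_Ioi (ae_of_all _ (fun y hy => ?_))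
          rw [← lintegral_const_mul _ (show Measurable
            (fun x : ℝ => gammaPDF a r x * ENNReal.ofReal (y - x)) from
            (gini_pdf_meas a r).mul (by fun_prop))]
          refine lintegral_congr (fun x => ?_)
          ring
  rw [hswap, gini_N1 ha hr, ← ENNReal.ofReal_add (by positivity) (by positivity)]
  congr 1
  ring

lemma gini_final {a r : ℝ} (ha : 0 < a) (hr : 0 < r) :
    (2 * ((r ^ a / Gamma a) ^ 2 * (1/r) ^ (2*a+1) * Gamma (2*a+1) * ((2:ℝ) ^ (-(2*a)) / a)))
      / (2 * (a / r))
    = Gamma (a + 1/2) / (Real.sqrt Real.pi * a * Gamma a) := by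
  have hG : 0 < Gamma a := Gamma_pos_of_pos ha
  have hS : 0 < Real.sqrt Real.pi := Real.sqrt_pos.mpr Real.pi_pos
  have hP : (0:ℝ) < 2 ^ (-(2*a)) := Real.rpow_pos_of_pos two_pos _
  have h2a1 : Gamma (2*a+1) = 2*a * Gamma (2*a) := Real.Gamma_add_one (by positivity)
  have hdup := Real.Gamma_mul_Gamma_add_half a
  have hpow : (2:ℝ) ^ (1-2*a) = 2 * 2 ^ (-(2*a)) := by
    rw [show (1:ℝ)-2*a = 1 + (-(2*a)) by ring, Real.rpow_add two_pos, Real.rpow_one]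
  rw [hpow] at hdup
  have h2g : Gamma (2*a) = Gamma a * Gamma (a + 1/2) / (2 * 2 ^ (-(2*a)) * Real.sqrt Real.pi) := by
    rw [eq_div_iff (by positivity)]
    linear_combination -hdup
  have hra : (r ^ a) ^ 2 * (1/r) ^ (2*a+1) = 1/r := by
    have e1 : (r ^ a) ^ 2 = r ^ (2*a) := by
      rw [pow_two, ← Real.rpow_add hr]; ring_nf
    have e2 : (1/r) ^ (2*a+1) = r ^ (-(2*a+1)) := by
      rw [one_div, Real.inv_rpow hr.le, ← Real.rpow_neg hr.le]
    rw [e1, e2, ← Real.rpow_add hr, show 2*a + -(2*a+1) = (-1:ℝ) by ring,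
      Real.rpow_neg_one, one_div]
  calc (2 * ((r ^ a / Gamma a) ^ 2 * (1/r) ^ (2*a+1) * Gamma (2*a+1) * ((2:ℝ) ^ (-(2*a)) / a)))
      / (2 * (a / r))
      = ((r ^ a) ^ 2 * (1/r) ^ (2*a+1))
        * (Gamma (2*a+1) * (2:ℝ) ^ (-(2*a)) / (Gamma a ^ 2 * a * (a / r))) := by ring
    _ = (1/r) * (Gamma (2*a+1) * (2:ℝ) ^ (-(2*a)) / (Gamma a ^ 2 * a * (a / r))) := by rw [hra]
    _ = Gamma (a + 1/2) / (Real.sqrt Real.pi * a * Gamma a) := by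
        rw [h2a1, h2g]
        field_simp


/-- For i.i.d. `X₁, X₂` with the `Gamma(α, λ)` distribution, the classical
Gini index `G = E[|X₁ − X₂|]/(2 E[X₁])` equals `Γ(α + 1/2)/(√π α Γ(α))`. -/
theorem Gini_index_gamma
    {Ω : Type*} [MeasureSpace Ω] [IsProbabilityMeasure (ℙ : Measure Ω)]
    (α l : ℝ) (hα : 0 < α) (hl : 0 < l) (X₁ X₂ : Ω → ℝ)
    (hmeas₁ : Measurable X₁) (hmeas₂ : Measurable X₂)
    (hindep : IndepFun X₁ X₂ ℙ)
    (hident₁ : Measure.map X₁ ℙ = gammaMeasure α l)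
    (hident₂ : Measure.map X₂ ℙ = gammaMeasure α l) :
    (∫ ω, |X₁ ω - X₂ ω| ∂ℙ) / (2 * ∫ ω, X₁ ω ∂ℙ) =
      Real.Gamma (α + 1 / 2) / (Real.sqrt Real.pi * α * Real.Gamma α) := by
  have hprob : IsProbabilityMeasure (gammaMeasure α l) := isProbabilityMeasure_gammaMeasure hα hl
  have hden : ∫ ω, X₁ ω ∂ℙ = α / l := by
    have h1 : ∫ ω, X₁ ω ∂ℙ = ∫ x, x ∂(Measure.map X₁ ℙ) :=
      (integral_map hmeas₁.aemeasurable aestronglyMeasurable_id).symm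
    rw [h1, hident₁, gini_withDensity α l hα hl (fun x => x), gini_restrict,
      gini_moment_one hα hl]
  have hnum : ∫ ω, |X₁ ω - X₂ ω| ∂ℙ
      = 2 * ((l ^ α / Gamma α) ^ 2 * (1/l) ^ (2*α+1) * Gamma (2*α+1)
          * ((2:ℝ) ^ (-(2*α)) / α)) := by
    rw [integral_eq_lintegral_of_nonneg_ae (f := fun ω => |X₁ ω - X₂ ω|) (ae_of_all _ fun ω => abs_nonneg _)
      ((hmeas₁.sub hmeas₂).abs.aestronglyMeasurable)]
    have hmap : Measure.map (fun ω => (X₁ ω, X₂ ω)) ℙ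
        = (gammaMeasure α l).prod (gammaMeasure α l) := by
      have h := (indepFun_iff_map_prod_eq_prod_map_map hmeas₁.aemeasurable
        hmeas₂.aemeasurable).mp hindep
      rw [hident₁, hident₂] at h
      exact h
    have hl1 : ∫⁻ ω, ENNReal.ofReal |X₁ ω - X₂ ω| ∂ℙ
        = ∫⁻ p : ℝ × ℝ, ENNReal.ofReal |p.1 - p.2|
            ∂((gammaMeasure α l).prod (gammaMeasure α l)) := by
      rw [← hmap, lintegral_map (f := fun p : ℝ × ℝ => ENNReal.ofReal |p.1 - p.2|) ((measurable_fst.sub measurable_snd).abs.ennreal_ofReal)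
        (hmeas₁.prodMk hmeas₂)]
    rw [hl1, gini_N hα hl, ENNReal.toReal_ofReal (by positivity)]
  rw [hnum, hden]
  exact gini_final hα hl
end

section
/- Let 2 ≤ m ≤ n and let X₁, …, Xₙ be i.i.d. copies of a nonnegative random variable X whose law is absolutely continuous with cumulative distribution function F and finite positive mean, and assume all the expectations and improper integrals below exist (are finite). Then the sample m-th Gini index ÎG_m = [(m−1)!/((n−1)(n−2)⋯(n−m+1))] · ( Σ_{1 ≤ i₁ < ⋯ < i_m ≤ n} ( max{X_{i₁},…,X_{i_m}} − min{X_{i₁},…,X_{i_m}} ) ) / ( Σ_{i=1}^{n} X_i ) satisfies E[ÎG_m] = (n/m) ∫₀^∞ ∫₀^∞ ( L(z)^m − E[1_{{X ≤ t}} e^{−Xz}]^m ) dt · L(z)^{n−m} dz − (n/m) ∫₀^∞ ∫₀^∞ E[1_{{X ≥ t}} e^{−Xz}]^m dt · L(z)^{n−m} dz, where L(z) = E[e^{−zX}] = ∫₀^∞ e^{−zx} dF(x) is the Laplace transform of the law of X. -/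
open MeasureTheory ProbabilityTheory Set
open scoped ENNReal

lemma lint_exp {b : ℝ} (hb : 0 < b) :
    ∫⁻ z in Ioi (0:ℝ), ENNReal.ofReal (Real.exp (-(z * b))) = ENNReal.ofReal (1 / b) := by
  have hint : IntegrableOn (fun z => Real.exp (-(b * z))) (Ioi (0:ℝ)) := by
    simpa only [neg_mul] using exp_neg_integrableOn_Ioi 0 hb
  have hval : ∫ z in Ioi (0:ℝ), Real.exp (-(b * z)) = 1 / b := by
    have h := integral_comp_mul_left_Ioi (fun x => Real.exp (-x)) 0 hb
    simp only [mul_zero, integral_exp_neg_Ioi, neg_zero, Real.exp_zero, smul_eq_mul,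
      mul_one] at h
    rw [h, one_div]
  calc ∫⁻ z in Ioi (0:ℝ), ENNReal.ofReal (Real.exp (-(z * b)))
      = ∫⁻ z in Ioi (0:ℝ), ENNReal.ofReal (Real.exp (-(b * z))) := by
        simp_rw [mul_comm]
    _ = ENNReal.ofReal (∫ z in Ioi (0:ℝ), Real.exp (-(b * z))) := by
        rw [← ofReal_integral_eq_lintegral_ofReal hint
          (ae_of_all _ fun z => (Real.exp_pos _).le)]
    _ = ENNReal.ofReal (1 / b) := by rw [hval]

lemma comb_const {n m : ℕ} (hm : 2 ≤ m) (hmn : m ≤ n) :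
    (Nat.factorial (m - 1) : ℝ) / (Nat.descFactorial (n - 1) (m - 1)) * (Nat.choose n m) =
      (n : ℝ) / m := by
  have hm1 : 1 ≤ m := le_trans (by norm_num) hm
  have hn1 : 1 ≤ n := le_trans hm1 hmn
  have hnat : m * (Nat.factorial (m-1) * Nat.choose n m) = n * Nat.descFactorial (n-1) (m-1) := by
    have h1 : Nat.descFactorial n m = Nat.factorial m * Nat.choose n m :=
      Nat.descFactorial_eq_factorial_mul_choose n m
    have h2 : Nat.descFactorial n m = n * Nat.descFactorial (n-1) (m-1) := by
      obtain ⟨n', rfl⟩ := Nat.exists_eq_add_of_le hn1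
      obtain ⟨m', rfl⟩ := Nat.exists_eq_add_of_le hm1
      simp only [Nat.add_sub_cancel_left, add_comm 1 n', add_comm 1 m']
      exact Nat.succ_descFactorial_succ n' m'
    have h3 : Nat.factorial m = m * Nat.factorial (m - 1) := by
      obtain ⟨m', rfl⟩ := Nat.exists_eq_add_of_le hm1
      simp [add_comm 1 m', Nat.factorial_succ]
    rw [← mul_assoc, ← h3, ← h1, h2]
  have hD : 0 < Nat.descFactorial (n-1) (m-1) :=
    Nat.pos_of_ne_zero (by
      intro h
      rw [Nat.descFactorial_eq_zero_iff_lt] at h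
      omega)
  have hDr : (Nat.descFactorial (n-1) (m-1) : ℝ) ≠ 0 := Nat.cast_ne_zero.2 hD.ne'
  have hmr : (m : ℝ) ≠ 0 := by positivity
  field_simp
  have := congrArg (fun k : ℕ => (k : ℝ)) hnat
  push_cast at this
  linarith [this]

lemma lint_prod_indep {Ω : Type*} [MeasureSpace Ω] [IsProbabilityMeasure (ℙ : Measure Ω)]
    {ι : Type*} {X : ι → Ω → ℝ} (hmeas : ∀ i, Measurable (X i))
    (hindep : iIndepFun X ℙ)
    (g : ι → ℝ → ℝ≥0∞) (hg : ∀ i, Measurable (g i)) (s : Finset ι) :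
    ∫⁻ ω, ∏ i ∈ s, g i (X i ω) ∂ℙ = ∏ i ∈ s, ∫⁻ ω, g i (X i ω) ∂ℙ := by
  classical
  have hY : iIndepFun (fun i ω => g i (X i ω)) ℙ :=
    hindep.comp g hg
  induction s using Finset.cons_induction with
  | empty => simp
  | cons i s hi ih =>
    have hmeasY : ∀ j, Measurable (fun ω => g j (X j ω)) := fun j => (hg j).comp (hmeas j)
    have hprod : Measurable (fun ω => ∏ j ∈ s, g j (X j ω)) :=
      Finset.measurable_prod _ fun j _ => hmeasY j
    have hIF : IndepFun (∏ j ∈ s, fun ω => g j (X j ω)) (fun ω => g i (X i ω)) ℙ :=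
      hY.indepFun_finsetProd_of_notMem hmeasY hi
    have hIF' : IndepFun (fun ω => g i (X i ω)) (fun ω => ∏ j ∈ s, g j (X j ω)) ℙ := by
      have : (∏ j ∈ s, fun ω => g j (X j ω)) = fun ω => ∏ j ∈ s, g j (X j ω) := by
        ext ω; simp
      rw [this] at hIF
      exact hIF.symm
    rw [Finset.prod_cons, ← ih]
    simp_rw [Finset.prod_cons]
    exact lintegral_mul_eq_lintegral_mul_lintegral_of_indepFun'' (hmeasY i).aemeasurable
      hprod.aemeasurable hIF'

/-- expectation of `1_{∀ i ∈ s, Xᵢ ∈ C} · e^{-z ∑ Xᵢ}` for iid X. -/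
lemma Eind_eq {Ω : Type*} [MeasureSpace Ω] [IsProbabilityMeasure (ℙ : Measure Ω)]
    {n m : ℕ} (X : Fin n → Ω → ℝ) (hmeas : ∀ i, Measurable (X i))
    (hindep : iIndepFun X ℙ)
    (μ₀ : Measure ℝ) (hident : ∀ i, Measure.map (X i) ℙ = μ₀)
    (z : ℝ) (s : Finset (Fin n)) (hcard : s.card = m)
    (C : Set ℝ) (hC : MeasurableSet C) :
    ∫⁻ ω, {ω' | ∀ i ∈ s, X i ω' ∈ C}.indicator
        (fun ω' => ENNReal.ofReal (Real.exp (-(z * ∑ i, X i ω')))) ω ∂ℙ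
      = (∫⁻ x in C, ENNReal.ofReal (Real.exp (-(z * x))) ∂μ₀) ^ m *
        (∫⁻ x, ENNReal.ofReal (Real.exp (-(z * x))) ∂μ₀) ^ (n - m) := by
  classical
  set g : Fin n → ℝ → ℝ≥0∞ := fun i x =>
    (if i ∈ s then C.indicator (fun _ => (1:ℝ≥0∞)) x else 1) * ENNReal.ofReal (Real.exp (-(z * x)))
    with hgdef
  have hg : ∀ i, Measurable (g i) := by
    intro i
    apply Measurable.mul
    · by_cases h : i ∈ s <;> simp [h, measurable_const.indicator hC]
    · exact (Real.measurable_exp.comp (measurable_id.const_mul z).neg).ennreal_ofReal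
  have hpoint : ∀ ω, {ω' | ∀ i ∈ s, X i ω' ∈ C}.indicator
      (fun ω' => ENNReal.ofReal (Real.exp (-(z * ∑ i, X i ω')))) ω
      = ∏ i, g i (X i ω) := by
    intro ω
    have hexp : ENNReal.ofReal (Real.exp (-(z * ∑ i, X i ω)))
        = ∏ i, ENNReal.ofReal (Real.exp (-(z * X i ω))) := by
      rw [← ENNReal.ofReal_prod_of_nonneg (fun i _ => (Real.exp_pos _).le),
        ← Real.exp_sum]
      congr 1
      rw [Finset.mul_sum]
      simp [Finset.sum_neg_distrib]
    rw [hgdef]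
    simp only
    rw [Finset.prod_mul_distrib, ← hexp]
    have h1 : (∏ i, if i ∈ s then C.indicator (fun _ => (1:ℝ≥0∞)) (X i ω) else 1)
        = ∏ i ∈ s, C.indicator (fun _ => (1:ℝ≥0∞)) (X i ω) := by
      rw [Finset.prod_ite_mem, Finset.univ_inter]
    rw [h1]
    by_cases h : ∀ i ∈ s, X i ω ∈ C
    · rw [Set.indicator_of_mem (by exact h)]
      rw [Finset.prod_congr rfl fun i hi => Set.indicator_of_mem (h i hi) _]
      simp
    · rw [Set.indicator_of_notMem (by exact h)]
      push_neg at h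
      obtain ⟨i, his, hiC⟩ := h
      rw [Finset.prod_eq_zero his (by simp [Set.indicator_of_notMem hiC])]
      simp
  calc ∫⁻ ω, {ω' | ∀ i ∈ s, X i ω' ∈ C}.indicator
        (fun ω' => ENNReal.ofReal (Real.exp (-(z * ∑ i, X i ω')))) ω ∂ℙ
      = ∫⁻ ω, ∏ i, g i (X i ω) ∂ℙ := by simp_rw [hpoint]
    _ = ∏ i, ∫⁻ ω, g i (X i ω) ∂ℙ := lint_prod_indep hmeas hindep g hg _
    _ = ∏ i : Fin n, (if i ∈ s then (∫⁻ x in C, ENNReal.ofReal (Real.exp (-(z * x))) ∂μ₀)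
          else (∫⁻ x, ENNReal.ofReal (Real.exp (-(z * x))) ∂μ₀)) := by
        refine Finset.prod_congr rfl fun i _ => ?_
        have hmap : ∫⁻ ω, g i (X i ω) ∂ℙ = ∫⁻ x, g i x ∂μ₀ := by
          rw [← hident i, lintegral_map (hg i) (hmeas i)]
        rw [hmap, hgdef]
        by_cases h : i ∈ s
        · simp only [h, if_true]
          have : ∀ x, C.indicator (fun _ => (1:ℝ≥0∞)) x * ENNReal.ofReal (Real.exp (-(z * x)))
              = C.indicator (fun x => ENNReal.ofReal (Real.exp (-(z * x)))) x := by
            intro x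
            by_cases hx : x ∈ C <;> simp [Set.indicator_of_mem, Set.indicator_of_notMem, hx]
          simp_rw [this]
          rw [lintegral_indicator hC]
        · simp only [h, if_false, one_mul]
    _ = (∫⁻ x in C, ENNReal.ofReal (Real.exp (-(z * x))) ∂μ₀) ^ m *
        (∫⁻ x, ENNReal.ofReal (Real.exp (-(z * x))) ∂μ₀) ^ (n - m) := by
        rw [Finset.prod_ite, Finset.prod_const, Finset.prod_const]
        congr 1
        · congr 1
          rw [Finset.filter_mem_eq_inter, Finset.univ_inter, hcard]
        · congr 1
          have he : Finset.filter (fun x => x ∉ s) Finset.univ = Finset.univ \ s := by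
            ext i; simp
          rw [he, Finset.card_sdiff_of_subset (Finset.subset_univ s), Finset.card_univ, hcard,
            Fintype.card_fin]

lemma coreZ {Ω : Type*} [MeasureSpace Ω] [IsProbabilityMeasure (ℙ : Measure Ω)]
    {n m : ℕ} (hm : 0 < m) (hmn : m ≤ n)
    (X : Fin n → Ω → ℝ) (hmeas : ∀ i, Measurable (X i))
    (hindep : iIndepFun X ℙ)
    (μ₀ : Measure ℝ) [IsProbabilityMeasure μ₀]
    (hident : ∀ i, Measure.map (X i) ℙ = μ₀)
    (hμnn : ∀ᵐ x ∂μ₀, 0 ≤ x)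
    (hpos : ∀ᵐ ω ∂(ℙ : Measure Ω), ∀ i, 0 < X i ω)
    (z : ℝ) (hz : 0 < z) (s : Finset (Fin n)) (hcard : s.card = m) (hs : s.Nonempty) :
    ∫⁻ ω, ENNReal.ofReal ((s.sup' hs (fun i => X i ω) - s.inf' hs (fun i => X i ω)) *
        Real.exp (-(z * ∑ i, X i ω))) ∂ℙ
      = (∫⁻ t in Ioi (0:ℝ),
          ((∫⁻ x, ENNReal.ofReal (Real.exp (-(z * x))) ∂μ₀) ^ m
            - (∫⁻ x in Iic t, ENNReal.ofReal (Real.exp (-(z * x))) ∂μ₀) ^ m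
            - (∫⁻ x in Ioi t, ENNReal.ofReal (Real.exp (-(z * x))) ∂μ₀) ^ m)) *
        (∫⁻ x, ENNReal.ofReal (Real.exp (-(z * x))) ∂μ₀) ^ (n - m) := by
  classical
  set f : ℝ → ℝ≥0∞ := fun x => ENNReal.ofReal (Real.exp (-(z * x))) with hfdef
  have hf : Measurable f := (Real.measurable_exp.comp (measurable_id.const_mul z).neg).ennreal_ofReal
  set lE : ℝ≥0∞ := ∫⁻ x, f x ∂μ₀ with hlEdef
  set aE : ℝ → ℝ≥0∞ := fun t => ∫⁻ x in Iic t, f x ∂μ₀ with haEdef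
  set bE : ℝ → ℝ≥0∞ := fun t => ∫⁻ x in Ioi t, f x ∂μ₀ with hbEdef
  have hlE1 : lE ≤ 1 := by
    calc lE ≤ ∫⁻ _, 1 ∂μ₀ := by
          refine lintegral_mono_ae (hμnn.mono fun x hx => ?_)
          simp only [hfdef]
          rw [← ENNReal.ofReal_one]
          exact ENNReal.ofReal_le_ofReal (Real.exp_le_one_iff.2 (by nlinarith))
      _ = 1 := by simp
  have hlEne : lE ≠ ∞ := (lt_of_le_of_lt hlE1 (by norm_num)).ne
  have haEle : ∀ t, aE t ≤ lE := fun t => setLIntegral_le_lintegral _ _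
  have hbEle : ∀ t, bE t ≤ lE := fun t => setLIntegral_le_lintegral _ _
  set Sup : Ω → ℝ := fun ω => s.sup' hs (fun i => X i ω) with hSupdef
  set Inf : Ω → ℝ := fun ω => s.inf' hs (fun i => X i ω) with hInfdef
  set S : Ω → ℝ := fun ω => ∑ i, X i ω with hSdef
  have hSup : Measurable Sup := by
    have h := Finset.measurable_sup' hs (fun i (_ : i ∈ s) => hmeas i)
    have he : Sup = s.sup' hs X := by ext ω; simp [hSupdef, Finset.sup'_apply]
    rw [he]; exact h
  have hInf : Measurable Inf := by
    have h : Measurable (s.inf' hs X) :=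
      Finset.inf'_induction hs X (fun a ha b hb => Measurable.inf' ha hb) (fun i _ => hmeas i)
    have he : Inf = s.inf' hs X := by ext ω; simp [hInfdef, Finset.inf'_apply]
    rw [he]; exact h
  have hS : Measurable S := Finset.measurable_sum _ fun i _ => hmeas i
  have hIle : ∀ ω, Inf ω ≤ Sup ω := by
    intro ω
    obtain ⟨j, hj⟩ := hs
    exact le_trans (Finset.inf'_le (fun i => X i ω) hj) (Finset.le_sup' (fun i => X i ω) hj)
  -- Step A: pointwise representation as t-integral, a.e.
  have stepA : ∀ᵐ ω ∂(ℙ : Measure Ω),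
      ENNReal.ofReal ((Sup ω - Inf ω) * Real.exp (-(z * S ω)))
        = ∫⁻ t in Ioi (0:ℝ), (Ico (Inf ω) (Sup ω)).indicator (fun _ => f (S ω)) t := by
    refine hpos.mono fun ω hω => ?_
    have hInfpos : 0 < Inf ω := by
      rw [hInfdef]
      exact (Finset.lt_inf'_iff hs).2 fun i _ => hω i
    have hIco : Ico (Inf ω) (Sup ω) ⊆ Ioi (0:ℝ) := fun x hx => lt_of_lt_of_le hInfpos hx.1
    rw [lintegral_indicator measurableSet_Ico, Measure.restrict_restrict measurableSet_Ico,
      inter_eq_self_of_subset_left hIco]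
    simp only [lintegral_const, Measure.restrict_apply MeasurableSet.univ, univ_inter,
      Real.volume_Ico]
    rw [ENNReal.ofReal_mul (sub_nonneg.2 (hIle ω)), mul_comm]
  rw [lintegral_congr_ae stepA]
  -- Step B: Tonelli swap
  have hFmeas : Measurable (fun p : Ω × ℝ =>
      (Ico (Inf p.1) (Sup p.1)).indicator (fun _ => f (S p.1)) p.2) := by
    have heq : (fun p : Ω × ℝ => (Ico (Inf p.1) (Sup p.1)).indicator (fun _ => f (S p.1)) p.2)
        = fun p : Ω × ℝ => {q : Ω × ℝ | Inf q.1 ≤ q.2 ∧ q.2 < Sup q.1}.indicator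
            (fun q => f (S q.1)) p := by
      ext p
      simp only [Set.indicator_apply, Set.mem_Ico, Set.mem_setOf_eq]
    rw [heq]
    exact ((hf.comp (hS.comp measurable_fst)).indicator
      ((measurableSet_le (hInf.comp measurable_fst) measurable_snd).inter
        (measurableSet_lt measurable_snd (hSup.comp measurable_fst))))
  rw [lintegral_lintegral_swap hFmeas.aemeasurable]
  -- Step C: fixed t in Ioi 0
  have stepC : ∀ t, ∫⁻ ω, (Ico (Inf ω) (Sup ω)).indicator (fun _ => f (S ω)) t ∂ℙ
      = (lE ^ m - (aE t) ^ m - (bE t) ^ m) * lE ^ (n - m) := by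
    intro t
    set E1 : ℝ≥0∞ := ∫⁻ ω, (Ico (Inf ω) (Sup ω)).indicator (fun _ => f (S ω)) t ∂ℙ with hE1
    have hE0 : ∫⁻ ω, f (S ω) ∂ℙ = lE ^ m * lE ^ (n - m) := by
      have := Eind_eq X hmeas hindep μ₀ hident z s hcard univ MeasurableSet.univ
      simpa [hSdef, hfdef, Measure.restrict_univ] using this
    have hE2 : ∫⁻ ω, {ω' | ∀ i ∈ s, X i ω' ∈ Iic t}.indicator (fun ω' => f (S ω')) ω ∂ℙ
        = (aE t) ^ m * lE ^ (n - m) :=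
      Eind_eq X hmeas hindep μ₀ hident z s hcard (Iic t) measurableSet_Iic
    have hE3 : ∫⁻ ω, {ω' | ∀ i ∈ s, X i ω' ∈ Ioi t}.indicator (fun ω' => f (S ω')) ω ∂ℙ
        = (bE t) ^ m * lE ^ (n - m) :=
      Eind_eq X hmeas hindep μ₀ hident z s hcard (Ioi t) measurableSet_Ioi
    -- pointwise partition
    have hpt : ∀ ω, f (S ω)
        = (Ico (Inf ω) (Sup ω)).indicator (fun _ => f (S ω)) t
          + {ω' | ∀ i ∈ s, X i ω' ∈ Iic t}.indicator (fun ω' => f (S ω')) ω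
          + {ω' | ∀ i ∈ s, X i ω' ∈ Ioi t}.indicator (fun ω' => f (S ω')) ω := by
      intro ω
      have hc2 : (ω ∈ {ω' | ∀ i ∈ s, X i ω' ∈ Iic t}) ↔ Sup ω ≤ t := by
        simp [hSupdef, Finset.sup'_le_iff]
      have hc3 : (ω ∈ {ω' | ∀ i ∈ s, X i ω' ∈ Ioi t}) ↔ t < Inf ω := by
        simp [hInfdef, Finset.lt_inf'_iff]
      by_cases h2 : Sup ω ≤ t
      · have hn1 : t ∉ Ico (Inf ω) (Sup ω) := fun hc => absurd (lt_of_lt_of_le hc.2 h2) (lt_irrefl t)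
        have hn3 : ¬ t < Inf ω := not_lt.2 (le_trans (hIle ω) h2)
        rw [Set.indicator_of_notMem hn1, Set.indicator_of_mem (hc2.2 h2),
          Set.indicator_of_notMem (fun hc => hn3 (hc3.1 hc))]
        simp
      · by_cases h3 : t < Inf ω
        · have hn1 : t ∉ Ico (Inf ω) (Sup ω) := fun hc => absurd hc.1 (not_le.2 h3)
          rw [Set.indicator_of_notMem hn1, Set.indicator_of_notMem (fun hc => h2 (hc2.1 hc)),
            Set.indicator_of_mem (hc3.2 h3)]
          simp
        · have h1 : t ∈ Ico (Inf ω) (Sup ω) := ⟨not_lt.1 h3, not_le.1 h2⟩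
          rw [Set.indicator_of_mem h1, Set.indicator_of_notMem (fun hc => h2 (hc2.1 hc)),
            Set.indicator_of_notMem (fun hc => absurd (hc3.1 hc) h3)]
          simp
    -- measurability of indicators
    have hmeasSet : ∀ C : Set ℝ, MeasurableSet C → MeasurableSet {ω' : Ω | ∀ i ∈ s, X i ω' ∈ C} := by
      intro C hC
      have : {ω' : Ω | ∀ i ∈ s, X i ω' ∈ C} = ⋂ i ∈ s, X i ⁻¹' C := by
        ext ω'; simp
      rw [this]
      exact MeasurableSet.biInter s.countable_toSet fun i _ => (hmeas i) hC
    have hm2 : Measurable fun ω => {ω' | ∀ i ∈ s, X i ω' ∈ Iic t}.indicator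
        (fun ω' => f (S ω')) ω :=
      (hf.comp hS).indicator (hmeasSet _ measurableSet_Iic)
    have hm3 : Measurable fun ω => {ω' | ∀ i ∈ s, X i ω' ∈ Ioi t}.indicator
        (fun ω' => f (S ω')) ω :=
      (hf.comp hS).indicator (hmeasSet _ measurableSet_Ioi)
    have hadd : lE ^ m * lE ^ (n - m)
        = E1 + ((aE t) ^ m * lE ^ (n - m) + (bE t) ^ m * lE ^ (n - m)) := by
      rw [← hE0, ← hE2, ← hE3]
      calc ∫⁻ ω, f (S ω) ∂ℙ
          = ∫⁻ ω, ((Ico (Inf ω) (Sup ω)).indicator (fun _ => f (S ω)) t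
            + ({ω' | ∀ i ∈ s, X i ω' ∈ Iic t}.indicator (fun ω' => f (S ω')) ω
            + {ω' | ∀ i ∈ s, X i ω' ∈ Ioi t}.indicator (fun ω' => f (S ω')) ω)) ∂ℙ := by
            refine lintegral_congr fun ω => ?_
            conv_lhs => rw [hpt ω]
            rw [add_assoc]
        _ = E1 + ((∫⁻ ω, {ω' | ∀ i ∈ s, X i ω' ∈ Iic t}.indicator (fun ω' => f (S ω')) ω ∂ℙ)
            + ∫⁻ ω, {ω' | ∀ i ∈ s, X i ω' ∈ Ioi t}.indicator (fun ω' => f (S ω')) ω ∂ℙ) := by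
            have hm23 : Measurable fun ω => {ω' | ∀ i ∈ s, X i ω' ∈ Iic t}.indicator (fun ω' => f (S ω')) ω
                + {ω' | ∀ i ∈ s, X i ω' ∈ Ioi t}.indicator (fun ω' => f (S ω')) ω := hm2.add hm3
            rw [lintegral_add_right _ hm23, lintegral_add_right _ hm3]
    have hpow_ne : lE ^ m * lE ^ (n - m) ≠ ∞ :=
      ENNReal.mul_ne_top (ENNReal.pow_ne_top hlEne) (ENNReal.pow_ne_top hlEne)
    have hfin2 : (aE t) ^ m * lE ^ (n - m) ≠ ∞ :=
      ENNReal.mul_ne_top (ENNReal.pow_ne_top (lt_of_le_of_lt (haEle t)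
        (lt_of_le_of_lt hlE1 (by norm_num))).ne) (ENNReal.pow_ne_top hlEne)
    have hfin3 : (bE t) ^ m * lE ^ (n - m) ≠ ∞ :=
      ENNReal.mul_ne_top (ENNReal.pow_ne_top (lt_of_le_of_lt (hbEle t)
        (lt_of_le_of_lt hlE1 (by norm_num))).ne) (ENNReal.pow_ne_top hlEne)
    have hE1eq : E1 = lE ^ m * lE ^ (n - m)
        - ((aE t) ^ m * lE ^ (n - m) + (bE t) ^ m * lE ^ (n - m)) := by
      rw [hadd]
      rw [ENNReal.add_sub_cancel_right (by exact ENNReal.add_ne_top.2 ⟨hfin2, hfin3⟩)]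
    rw [hE1eq]
    have hsub : (lE ^ m - (aE t) ^ m - (bE t) ^ m) * lE ^ (n - m)
        = lE ^ m * lE ^ (n - m) - (aE t) ^ m * lE ^ (n - m) - (bE t) ^ m * lE ^ (n - m) := by
      rw [ENNReal.sub_mul (fun _ _ => ENNReal.pow_ne_top hlEne),
        ENNReal.sub_mul (fun _ _ => ENNReal.pow_ne_top hlEne)]
    rw [hsub, tsub_tsub]
  calc ∫⁻ t in Ioi (0:ℝ), ∫⁻ ω, (Ico (Inf ω) (Sup ω)).indicator (fun _ => f (S ω)) t ∂ℙ
      = ∫⁻ t in Ioi (0:ℝ), (lE ^ m - (aE t) ^ m - (bE t) ^ m) * lE ^ (n - m) := by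
        exact lintegral_congr fun t => stepC t
    _ = (∫⁻ t in Ioi (0:ℝ), (lE ^ m - (aE t) ^ m - (bE t) ^ m)) * lE ^ (n - m) := by
        rw [lintegral_mul_const' _ _ (ENNReal.pow_ne_top hlEne)]

lemma coreS {Ω : Type*} [MeasureSpace Ω] [IsProbabilityMeasure (ℙ : Measure Ω)]
    {n m : ℕ} (hm : 0 < m) (hmn : m ≤ n)
    (X : Fin n → Ω → ℝ) (hmeas : ∀ i, Measurable (X i))
    (hindep : iIndepFun X ℙ)
    (μ₀ : Measure ℝ) [IsProbabilityMeasure μ₀]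
    (hident : ∀ i, Measure.map (X i) ℙ = μ₀)
    (hμnn : ∀ᵐ x ∂μ₀, 0 ≤ x)
    (hpos : ∀ᵐ ω ∂(ℙ : Measure Ω), ∀ i, 0 < X i ω)
    (s : Finset (Fin n)) (hcard : s.card = m) (hs : s.Nonempty) :
    ∫⁻ ω, ENNReal.ofReal ((s.sup' hs (fun i => X i ω) - s.inf' hs (fun i => X i ω)) /
        ∑ i, X i ω) ∂ℙ
      = ∫⁻ z in Ioi (0:ℝ),
          (∫⁻ t in Ioi (0:ℝ),
            ((∫⁻ x, ENNReal.ofReal (Real.exp (-(z * x))) ∂μ₀) ^ m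
              - (∫⁻ x in Iic t, ENNReal.ofReal (Real.exp (-(z * x))) ∂μ₀) ^ m
              - (∫⁻ x in Ioi t, ENNReal.ofReal (Real.exp (-(z * x))) ∂μ₀) ^ m)) *
          (∫⁻ x, ENNReal.ofReal (Real.exp (-(z * x))) ∂μ₀) ^ (n - m) := by
  classical
  set Sup : Ω → ℝ := fun ω => s.sup' hs (fun i => X i ω) with hSupdef
  set Inf : Ω → ℝ := fun ω => s.inf' hs (fun i => X i ω) with hInfdef
  set S : Ω → ℝ := fun ω => ∑ i, X i ω with hSdef
  have hSup : Measurable Sup := by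
    have h := Finset.measurable_sup' hs (fun i (_ : i ∈ s) => hmeas i)
    have he : Sup = s.sup' hs X := by ext ω; simp [hSupdef, Finset.sup'_apply]
    rw [he]; exact h
  have hInf : Measurable Inf := by
    have h : Measurable (s.inf' hs X) :=
      Finset.inf'_induction hs X (fun a ha b hb => Measurable.inf' ha hb) (fun i _ => hmeas i)
    have he : Inf = s.inf' hs X := by ext ω; simp [hInfdef, Finset.inf'_apply]
    rw [he]; exact h
  have hS : Measurable S := Finset.measurable_sum _ fun i _ => hmeas i
  have hIle : ∀ ω, Inf ω ≤ Sup ω := by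
    intro ω
    obtain ⟨j, hj⟩ := hs
    exact le_trans (Finset.inf'_le (fun i => X i ω) hj) (Finset.le_sup' (fun i => X i ω) hj)
  have stepA : ∀ᵐ ω ∂(ℙ : Measure Ω),
      ENNReal.ofReal ((Sup ω - Inf ω) / S ω)
        = ∫⁻ z in Ioi (0:ℝ), ENNReal.ofReal ((Sup ω - Inf ω) * Real.exp (-(z * S ω))) := by
    refine hpos.mono fun ω hω => ?_
    have hSpos : 0 < S ω := by
      rw [hSdef]
      obtain ⟨j, hj⟩ := hs
      exact Finset.sum_pos (fun i _ => hω i) ⟨j, Finset.mem_univ j⟩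
    have hRnn : 0 ≤ Sup ω - Inf ω := sub_nonneg.2 (hIle ω)
    calc ENNReal.ofReal ((Sup ω - Inf ω) / S ω)
        = ENNReal.ofReal (Sup ω - Inf ω) * ENNReal.ofReal (1 / S ω) := by
          rw [← ENNReal.ofReal_mul hRnn, mul_one_div]
      _ = ENNReal.ofReal (Sup ω - Inf ω)
          * ∫⁻ z in Ioi (0:ℝ), ENNReal.ofReal (Real.exp (-(z * S ω))) := by
          rw [lint_exp hSpos]
      _ = ∫⁻ z in Ioi (0:ℝ), ENNReal.ofReal ((Sup ω - Inf ω) * Real.exp (-(z * S ω))) := by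
          rw [← lintegral_const_mul' _ _ ENNReal.ofReal_ne_top]
          refine lintegral_congr fun z => ?_
          rw [← ENNReal.ofReal_mul hRnn]
  rw [lintegral_congr_ae stepA]
  have hFmeas : Measurable (fun p : Ω × ℝ =>
      ENNReal.ofReal ((Sup p.1 - Inf p.1) * Real.exp (-(p.2 * S p.1)))) := by
    apply Measurable.ennreal_ofReal
    exact (((hSup.sub hInf).comp measurable_fst)).mul
      ((Real.measurable_exp).comp ((measurable_snd.mul (hS.comp measurable_fst)).neg))
  rw [lintegral_lintegral_swap hFmeas.aemeasurable]
  refine setLIntegral_congr_fun measurableSet_Ioi (fun z hz => ?_)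
  exact coreZ hm hmn X hmeas hindep μ₀ hident hμnn hpos z hz s hcard hs

/-- For `2 ≤ m ≤ n` and i.i.d. copies `X₁,…,Xₙ` of a nonnegative,
absolutely continuous random variable `X` with law `μ₀`, cdf `F` and finite positive mean,
assuming all the expectations and improper integrals involved exist, the expectation of the
sample `m`-th Gini index
`ÎG_m = [(m−1)!/((n−1)⋯(n−m+1))] Σ_{i₁<⋯<i_m} (max − min) / Σᵢ Xᵢ`
equals
`(n/m) ∫₀^∞ ∫₀^∞ (L(z)^m − E[1_{X≤t} e^{−Xz}]^m) dt L(z)^{n−m} dz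
  − (n/m) ∫₀^∞ ∫₀^∞ E[1_{X≥t} e^{−Xz}]^m dt L(z)^{n−m} dz`,
where `L` is the Laplace transform of the law of `X`. -/
theorem expectation_sample_mth_Gini_index
    {Ω : Type*} [MeasureSpace Ω] [IsProbabilityMeasure (ℙ : Measure Ω)]
    (n m : ℕ) (hm : 2 ≤ m) (hmn : m ≤ n)
    (X : Fin n → Ω → ℝ) (hmeas : ∀ i, Measurable (X i))
    (hnonneg : ∀ i, ∀ ω, 0 ≤ X i ω)
    (hindep : iIndepFun X ℙ)
    (μ₀ : Measure ℝ) [IsProbabilityMeasure μ₀]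
    (hident : ∀ i, Measure.map (X i) ℙ = μ₀)
    (hac : μ₀ ≪ volume)
    (hmeanInt : Integrable id μ₀) (hmean : 0 < ∫ x, x ∂μ₀)
    (L : ℝ → ℝ) (hL : ∀ z, L z = ∫ x, Real.exp (-(z * x)) ∂μ₀)
    (G : Ω → ℝ)
    (hG : ∀ ω, G ω =
      (Nat.factorial (m - 1) : ℝ) / (Nat.descFactorial (n - 1) (m - 1)) *
        ((∑ s ∈ Finset.powersetCard m (Finset.univ : Finset (Fin n)),
          if h : s.Nonempty then
            s.sup' h (fun i => X i ω) - s.inf' h (fun i => X i ω)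
          else 0) /
        (∑ i, X i ω)))
    (hGint : Integrable G ℙ)
    (h1 : ∀ z ∈ Ioi (0 : ℝ), IntegrableOn
      (fun t => L z ^ m - (∫ x in Iic t, Real.exp (-(x * z)) ∂μ₀) ^ m) (Ioi 0))
    (h2 : IntegrableOn (fun z =>
      (∫ t in Ioi (0 : ℝ), (L z ^ m - (∫ x in Iic t, Real.exp (-(x * z)) ∂μ₀) ^ m)) *
        L z ^ (n - m)) (Ioi 0))
    (h3 : ∀ z ∈ Ioi (0 : ℝ), IntegrableOn
      (fun t => (∫ x in Ici t, Real.exp (-(x * z)) ∂μ₀) ^ m) (Ioi 0))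
    (h4 : IntegrableOn (fun z =>
      (∫ t in Ioi (0 : ℝ), (∫ x in Ici t, Real.exp (-(x * z)) ∂μ₀) ^ m) *
        L z ^ (n - m)) (Ioi 0)) :
    ∫ ω, G ω ∂ℙ =
      (n / m : ℝ) *
          (∫ z in Ioi (0 : ℝ),
            (∫ t in Ioi (0 : ℝ),
              (L z ^ m - (∫ x in Iic t, Real.exp (-(x * z)) ∂μ₀) ^ m)) * L z ^ (n - m)) -
        (n / m : ℝ) *
          (∫ z in Ioi (0 : ℝ),
            (∫ t in Ioi (0 : ℝ),
              (∫ x in Ici t, Real.exp (-(x * z)) ∂μ₀) ^ m) * L z ^ (n - m)) := by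
  classical
  have hm0 : 0 < m := lt_of_lt_of_le (by norm_num) hm
  have hn0 : 0 < n := lt_of_lt_of_le hm0 hmn
  have i0 : Fin n := ⟨0, hn0⟩
  -- basic a.e. facts
  have hsing : ∀ a : ℝ, μ₀ {a} = 0 := fun a => hac Real.volume_singleton
  have hμnn : ∀ᵐ x ∂μ₀, 0 ≤ x := by
    rw [ae_iff]
    have hset : {x : ℝ | ¬ 0 ≤ x} = Iio 0 := by ext x; simp [not_le]
    rw [hset, ← hident i0, Measure.map_apply (hmeas i0) measurableSet_Iio]
    have : X i0 ⁻¹' Iio 0 = ∅ := by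
      ext ω; simp [not_lt.2 (hnonneg i0 ω)]
    simp [this]
  have hpos : ∀ᵐ ω ∂(ℙ : Measure Ω), ∀ i, 0 < X i ω := by
    rw [ae_all_iff]
    intro i
    rw [ae_iff]
    have hset : {ω | ¬ 0 < X i ω} = X i ⁻¹' (Iic 0) := by
      ext ω; simp [not_lt]
    rw [hset, ← Measure.map_apply (hmeas i) measurableSet_Iic, hident i]
    have h1' : μ₀ (Iic 0) ≤ μ₀ (Iio 0) + μ₀ {0} := by
      have hss : Iic (0:ℝ) = Iio 0 ∪ {0} := by
        exact Iio_union_right.symm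
      rw [hss]
      exact measure_union_le _ _
    have h2' : μ₀ (Iio 0) = 0 := by
      have := hμnn
      rw [ae_iff] at this
      have hset2 : {x : ℝ | ¬ 0 ≤ x} = Iio 0 := by ext x; simp [not_le]
      rwa [hset2] at this
    exact le_antisymm (by simpa [h2', hsing] using h1') (by positivity)
  -- integrability of the exponentials
  have hmeasexp : ∀ z : ℝ, Measurable fun x : ℝ => Real.exp (-(x * z)) :=
    fun z => (Real.measurable_exp.comp (measurable_id.mul_const z).neg)
  have hexpint : ∀ z : ℝ, 0 < z → Integrable (fun x => Real.exp (-(x * z))) μ₀ := by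
    intro z hz
    refine Integrable.mono' (integrable_const 1) (hmeasexp z).aestronglyMeasurable
      (hμnn.mono fun x hx => ?_)
    rw [Real.norm_eq_abs, abs_of_pos (Real.exp_pos _)]
    exact Real.exp_le_one_iff.2 (by nlinarith)
  -- ENNReal versions
  set lE : ℝ → ℝ≥0∞ := fun z => ∫⁻ x, ENNReal.ofReal (Real.exp (-(z * x))) ∂μ₀ with hlEdef
  set aE : ℝ → ℝ → ℝ≥0∞ := fun z t => ∫⁻ x in Iic t, ENNReal.ofReal (Real.exp (-(z * x))) ∂μ₀
    with haEdef
  set bE : ℝ → ℝ → ℝ≥0∞ := fun z t => ∫⁻ x in Ioi t, ENNReal.ofReal (Real.exp (-(z * x))) ∂μ₀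
    with hbEdef
  set W𝕎 : ℝ≥0∞ := ∫⁻ z in Ioi (0:ℝ),
      (∫⁻ t in Ioi (0:ℝ), (lE z ^ m - aE z t ^ m - bE z t ^ m)) * lE z ^ (n - m) with h𝕎def
  -- facts for z > 0
  have hIciIoi : ∀ z t : ℝ, (∫ x in Ici t, Real.exp (-(x * z)) ∂μ₀)
      = ∫ x in Ioi t, Real.exp (-(x * z)) ∂μ₀ := by
    intro z t
    exact setIntegral_congr_set (Ioi_ae_eq_Ici' (hsing t)).symm
  have hLnn : ∀ z : ℝ, 0 ≤ L z := by
    intro z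
    rw [hL z]
    exact integral_nonneg fun x => (Real.exp_pos _).le
  have hAnn : ∀ z t : ℝ, 0 ≤ ∫ x in Iic t, Real.exp (-(x * z)) ∂μ₀ := fun z t =>
    setIntegral_nonneg measurableSet_Iic fun x _ => (Real.exp_pos _).le
  have hBnn : ∀ z t : ℝ, 0 ≤ ∫ x in Ici t, Real.exp (-(x * z)) ∂μ₀ := fun z t =>
    setIntegral_nonneg measurableSet_Ici fun x _ => (Real.exp_pos _).le
  have hABL : ∀ z : ℝ, 0 < z → ∀ t : ℝ,
      (∫ x in Iic t, Real.exp (-(x * z)) ∂μ₀) + (∫ x in Ici t, Real.exp (-(x * z)) ∂μ₀)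
        = L z := by
    intro z hz t
    rw [hIciIoi z t, hL z]
    have hcomm : (∫ x, Real.exp (-(z * x)) ∂μ₀) = ∫ x, Real.exp (-(x * z)) ∂μ₀ := by
      simp_rw [mul_comm]
    rw [hcomm]
    have hcompl := integral_add_compl (s := Iic t) measurableSet_Iic (hexpint z hz)
    rw [compl_Iic] at hcompl
    exact hcompl
  have hwnn : ∀ z : ℝ, 0 < z → ∀ t : ℝ,
      0 ≤ L z ^ m - (∫ x in Iic t, Real.exp (-(x * z)) ∂μ₀) ^ m
        - (∫ x in Ici t, Real.exp (-(x * z)) ∂μ₀) ^ m := by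
    intro z hz t
    have := pow_add_pow_le (hAnn z t) (hBnn z t) hm0.ne'
    rw [hABL z hz t] at this
    linarith
  -- ofReal identifications
  have hofL : ∀ z : ℝ, 0 < z → ENNReal.ofReal (L z) = lE z := by
    intro z hz
    rw [hL z, hlEdef]
    have hminj : (fun x => Real.exp (-(z * x))) = fun x => Real.exp (-(x * z)) := by
      funext x; rw [mul_comm]
    rw [hminj]
    rw [ofReal_integral_eq_lintegral_ofReal (hexpint z hz)
      (ae_of_all _ fun x => (Real.exp_pos _).le)]
    simp_rw [mul_comm]
  have hofA : ∀ z : ℝ, 0 < z → ∀ t : ℝ,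
      ENNReal.ofReal (∫ x in Iic t, Real.exp (-(x * z)) ∂μ₀) = aE z t := by
    intro z hz t
    rw [haEdef]
    rw [ofReal_integral_eq_lintegral_ofReal ((hexpint z hz).integrableOn)
      (ae_of_all _ fun x => (Real.exp_pos _).le)]
    simp_rw [mul_comm]
  have hofB : ∀ z : ℝ, 0 < z → ∀ t : ℝ,
      ENNReal.ofReal (∫ x in Ici t, Real.exp (-(x * z)) ∂μ₀) = bE z t := by
    intro z hz t
    rw [hIciIoi z t, hbEdef]
    rw [ofReal_integral_eq_lintegral_ofReal ((hexpint z hz).integrableOn)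
      (ae_of_all _ fun x => (Real.exp_pos _).le)]
    simp_rw [mul_comm]
  -- inner t-integral conversion
  have hw : ∀ z : ℝ, 0 < z →
      ENNReal.ofReal (∫ t in Ioi (0:ℝ),
          (L z ^ m - (∫ x in Iic t, Real.exp (-(x * z)) ∂μ₀) ^ m
            - (∫ x in Ici t, Real.exp (-(x * z)) ∂μ₀) ^ m))
        = ∫⁻ t in Ioi (0:ℝ), (lE z ^ m - aE z t ^ m - bE z t ^ m) := by
    intro z hz
    have hint : IntegrableOn (fun t =>
        (L z ^ m - (∫ x in Iic t, Real.exp (-(x * z)) ∂μ₀) ^ m)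
          - (∫ x in Ici t, Real.exp (-(x * z)) ∂μ₀) ^ m) (Ioi (0:ℝ)) :=
      (h1 z hz).sub (h3 z hz)
    rw [ofReal_integral_eq_lintegral_ofReal hint
      (ae_restrict_of_ae (ae_of_all _ fun t => by simpa using hwnn z hz t))]
    refine lintegral_congr fun t => ?_
    rw [ENNReal.ofReal_sub _ (pow_nonneg (hBnn z t) m),
      ENNReal.ofReal_sub _ (pow_nonneg (hAnn z t) m),
      ENNReal.ofReal_pow (hLnn z), ENNReal.ofReal_pow (hAnn z t),
      ENNReal.ofReal_pow (hBnn z t), hofL z hz, hofA z hz t, hofB z hz t]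
  -- real outer integral W
  set W : ℝ := ∫ z in Ioi (0:ℝ),
      (∫ t in Ioi (0:ℝ),
        (L z ^ m - (∫ x in Iic t, Real.exp (-(x * z)) ∂μ₀) ^ m
          - (∫ x in Ici t, Real.exp (-(x * z)) ∂μ₀) ^ m)) * L z ^ (n - m) with hWdef
  have hsplit : ∀ z ∈ Ioi (0:ℝ),
      (∫ t in Ioi (0:ℝ),
        (L z ^ m - (∫ x in Iic t, Real.exp (-(x * z)) ∂μ₀) ^ m
          - (∫ x in Ici t, Real.exp (-(x * z)) ∂μ₀) ^ m)) * L z ^ (n - m)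
      = (∫ t in Ioi (0:ℝ), (L z ^ m - (∫ x in Iic t, Real.exp (-(x * z)) ∂μ₀) ^ m))
          * L z ^ (n - m)
        - (∫ t in Ioi (0:ℝ), (∫ x in Ici t, Real.exp (-(x * z)) ∂μ₀) ^ m) * L z ^ (n - m) := by
    intro z hz
    have : (∫ t in Ioi (0:ℝ),
        (L z ^ m - (∫ x in Iic t, Real.exp (-(x * z)) ∂μ₀) ^ m
          - (∫ x in Ici t, Real.exp (-(x * z)) ∂μ₀) ^ m))
        = (∫ t in Ioi (0:ℝ), (L z ^ m - (∫ x in Iic t, Real.exp (-(x * z)) ∂μ₀) ^ m))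
          - ∫ t in Ioi (0:ℝ), (∫ x in Ici t, Real.exp (-(x * z)) ∂μ₀) ^ m :=
      integral_sub (h1 z hz) (h3 z hz)
    rw [this, sub_mul]
  have hWint : IntegrableOn (fun z =>
      (∫ t in Ioi (0:ℝ),
        (L z ^ m - (∫ x in Iic t, Real.exp (-(x * z)) ∂μ₀) ^ m
          - (∫ x in Ici t, Real.exp (-(x * z)) ∂μ₀) ^ m)) * L z ^ (n - m)) (Ioi 0) := by
    refine IntegrableOn.congr_fun (h2.sub h4) (fun z hz => ?_) measurableSet_Ioi
    simp only [Pi.sub_apply]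
    rw [hsplit z hz]
  have hWintnn : ∀ z ∈ Ioi (0:ℝ),
      0 ≤ (∫ t in Ioi (0:ℝ),
        (L z ^ m - (∫ x in Iic t, Real.exp (-(x * z)) ∂μ₀) ^ m
          - (∫ x in Ici t, Real.exp (-(x * z)) ∂μ₀) ^ m)) * L z ^ (n - m) := by
    intro z hz
    exact mul_nonneg (setIntegral_nonneg measurableSet_Ioi fun t _ => hwnn z hz t)
      (pow_nonneg (hLnn z) _)
  have hWofReal : ENNReal.ofReal W = W𝕎 := by
    rw [hWdef, ofReal_integral_eq_lintegral_ofReal hWint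
      ((ae_restrict_iff' measurableSet_Ioi).2 (ae_of_all _ fun z hz => hWintnn z hz))]
    refine setLIntegral_congr_fun measurableSet_Ioi (fun z hz => ?_)
    rw [ENNReal.ofReal_mul (setIntegral_nonneg measurableSet_Ioi fun t _ => hwnn z hz t),
      ENNReal.ofReal_pow (hLnn z), hofL z hz, hw z hz]
  have hWnn : 0 ≤ W :=
    setIntegral_nonneg measurableSet_Ioi fun z hz => hWintnn z hz
  have hWtoReal : W𝕎.toReal = W := by rw [← hWofReal, ENNReal.toReal_ofReal hWnn]
  -- LHS
  set c : ℝ := (Nat.factorial (m - 1) : ℝ) / (Nat.descFactorial (n - 1) (m - 1)) with hcdef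
  have hdescpos : 0 < Nat.descFactorial (n - 1) (m - 1) := by
    apply Nat.pos_of_ne_zero
    intro h
    rw [Nat.descFactorial_eq_zero_iff_lt] at h
    exact absurd h (not_lt.2 (Nat.sub_le_sub_right hmn 1))
  have hcpos : 0 < c := div_pos (Nat.cast_pos.2 (Nat.factorial_pos _)) (Nat.cast_pos.2 hdescpos)
  set P := Finset.powersetCard m (Finset.univ : Finset (Fin n)) with hPdef
  have hPne : ∀ s ∈ P, s.Nonempty := by
    intro s hsP
    refine Finset.card_pos.1 ?_
    rw [(Finset.mem_powersetCard.1 hsP).2]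
    exact hm0
  have hPcard : ∀ s ∈ P, s.card = m := fun s hsP => (Finset.mem_powersetCard.1 hsP).2
  set S : Ω → ℝ := fun ω => ∑ i, X i ω with hSdef
  set Num : Ω → ℝ := fun ω => ∑ s ∈ P,
    if h : s.Nonempty then s.sup' h (fun i => X i ω) - s.inf' h (fun i => X i ω) else 0
    with hNumdef
  set H : Ω → ℝ := fun ω => Num ω / S ω with hHdef
  have hIle : ∀ (s : Finset (Fin n)) (h : s.Nonempty) (ω : Ω),
      s.inf' h (fun i => X i ω) ≤ s.sup' h (fun i => X i ω) := by
    intro s h ω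
    obtain ⟨j, hj⟩ := h
    exact le_trans (Finset.inf'_le (fun i => X i ω) hj) (Finset.le_sup' (fun i => X i ω) hj)
  have hNumnn : ∀ ω, 0 ≤ Num ω := by
    intro ω
    refine Finset.sum_nonneg fun s hsP => ?_
    rw [dif_pos (hPne s hsP)]
    exact sub_nonneg.2 (hIle s (hPne s hsP) ω)
  have hSnn : ∀ ω, 0 ≤ S ω := fun ω => Finset.sum_nonneg fun i _ => hnonneg i ω
  have hGH : ∀ ω, G ω = c * H ω := fun ω => hG ω
  have hHint : Integrable H ℙ := by
    have he : H = fun ω => c⁻¹ * G ω := by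
      funext ω
      rw [hG ω, hHdef]
      simp only
      rw [← mul_assoc, inv_mul_cancel₀ hcpos.ne', one_mul]
    rw [he]
    exact hGint.const_mul _
  have hHnn : 0 ≤ᵐ[ℙ] H := ae_of_all _ fun ω => div_nonneg (hNumnn ω) (hSnn ω)
  have hEH : ∫ ω, H ω ∂ℙ = (∫⁻ ω, ENNReal.ofReal (H ω) ∂ℙ).toReal :=
    integral_eq_lintegral_of_nonneg_ae hHnn hHint.aestronglyMeasurable
  -- lintegral of H
  set F : Finset (Fin n) → Ω → ℝ≥0∞ := fun s ω =>
    if h : s.Nonempty then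
      ENNReal.ofReal ((s.sup' h (fun i => X i ω) - s.inf' h (fun i => X i ω)) / S ω)
    else 0 with hFdef
  have hHsum : ∀ ω, ENNReal.ofReal (H ω) = ∑ s ∈ P, F s ω := by
    intro ω
    rw [hHdef]
    simp only
    rw [hNumdef]
    simp only
    rw [Finset.sum_div, ENNReal.ofReal_sum_of_nonneg (fun s hsP => by
      rw [dif_pos (hPne s hsP)]
      exact div_nonneg (sub_nonneg.2 (hIle s (hPne s hsP) ω)) (hSnn ω))]
    refine Finset.sum_congr rfl fun s hsP => ?_
    rw [hFdef]
    simp only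
    rw [dif_pos (hPne s hsP), dif_pos (hPne s hsP)]
  have hFmeas : ∀ s : Finset (Fin n), Measurable (F s) := by
    intro s
    rw [hFdef]
    by_cases h : s.Nonempty
    · simp only [dif_pos h]
      apply Measurable.ennreal_ofReal
      apply Measurable.div
      · apply Measurable.sub
        · have hh := Finset.measurable_sup' h (fun i (_ : i ∈ s) => hmeas i)
          have he : (fun ω => s.sup' h (fun i => X i ω)) = s.sup' h X := by
            ext ω; simp [Finset.sup'_apply]
          rw [he]; exact hh
        · have hh : Measurable (s.inf' h X) :=
            Finset.inf'_induction h X (fun a ha b hb => Measurable.inf' ha hb)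
              (fun i _ => hmeas i)
          have he : (fun ω => s.inf' h (fun i => X i ω)) = s.inf' h X := by
            ext ω; simp [Finset.inf'_apply]
          rw [he]; exact hh
      · exact Finset.measurable_sum _ fun i _ => hmeas i
    · simp only [dif_neg h]
      exact measurable_const
  have hlintH : ∫⁻ ω, ENNReal.ofReal (H ω) ∂ℙ = (P.card : ℝ≥0∞) * W𝕎 := by
    calc ∫⁻ ω, ENNReal.ofReal (H ω) ∂ℙ = ∫⁻ ω, ∑ s ∈ P, F s ω ∂ℙ := by
          exact lintegral_congr fun ω => hHsum ω
      _ = ∑ s ∈ P, ∫⁻ ω, F s ω ∂ℙ := lintegral_finset_sum _ fun s _ => hFmeas s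
      _ = ∑ _s ∈ P, W𝕎 := by
          refine Finset.sum_congr rfl fun s hsP => ?_
          have hne := hPne s hsP
          have : F s = fun ω =>
              ENNReal.ofReal ((s.sup' hne (fun i => X i ω) - s.inf' hne (fun i => X i ω))
                / ∑ i, X i ω) := by
            funext ω
            rw [hFdef]
            simp only
            rw [dif_pos hne]
          rw [this]
          exact coreS hm0 hmn X hmeas hindep μ₀ hident hμnn hpos s (hPcard s hsP) hne
      _ = (P.card : ℝ≥0∞) * W𝕎 := by
          rw [Finset.sum_const, nsmul_eq_mul]
  have hPcardval : P.card = Nat.choose n m := by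
    rw [hPdef, Finset.card_powersetCard, Finset.card_univ, Fintype.card_fin]
  have hEHval : ∫ ω, H ω ∂ℙ = (Nat.choose n m : ℝ) * W := by
    rw [hEH, hlintH, ENNReal.toReal_mul, hWtoReal, hPcardval]
    simp
  have hLHS : ∫ ω, G ω ∂ℙ = (n / m : ℝ) * W := by
    calc ∫ ω, G ω ∂ℙ = ∫ ω, c * H ω ∂ℙ := by
          refine integral_congr_ae (ae_of_all _ fun ω => ?_)
          exact hGH ω
      _ = c * ∫ ω, H ω ∂ℙ := integral_const_mul c H
      _ = c * ((Nat.choose n m : ℝ) * W) := by rw [hEHval]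
      _ = (c * (Nat.choose n m : ℝ)) * W := by ring
      _ = (n / m : ℝ) * W := by rw [hcdef, comb_const hm hmn]
  -- RHS
  have hRHS : (n / m : ℝ) *
          (∫ z in Ioi (0 : ℝ),
            (∫ t in Ioi (0 : ℝ),
              (L z ^ m - (∫ x in Iic t, Real.exp (-(x * z)) ∂μ₀) ^ m)) * L z ^ (n - m)) -
        (n / m : ℝ) *
          (∫ z in Ioi (0 : ℝ),
            (∫ t in Ioi (0 : ℝ),
              (∫ x in Ici t, Real.exp (-(x * z)) ∂μ₀) ^ m) * L z ^ (n - m))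
      = (n / m : ℝ) * W := by
    rw [← mul_sub]
    congr 1
    rw [← integral_sub h2 h4, hWdef]
    refine setIntegral_congr_fun measurableSet_Ioi fun z hz => ?_
    exact (hsplit z hz).symm
  rw [hLHS, hRHS]
end
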